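/- arXiv:2408.02453 — 12 statements merged into one kernel-verified Lean document; each statement's English description precedes it below -/
import Mathlib

section
/- Let 1 < p ≤ 2 and s ≥ 2. Define G(t) = (1 + t^s)² / (1 + t² − 2t·cos(π/p))^s for t ∈ [0,1]. Then G attains its minimum on [0,1] at t = 1, i.e., G(t) ≥ G(1) = 4^(1−s) / sin^(2s)(π/(2p)) for all t ∈ [0,1]. -/
open Real

lemma aux_pm (x q : ℝ) (hx : 0 ≤ x) (hq : 1 ≤ q) :
    ((1 + x) / 2) ^ q ≤ (1 + x ^ q) / 2 := by
  lift x to NNReal using hx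
  have h := NNReal.rpow_arith_mean_le_arith_mean2_rpow (1/2) (1/2) 1 x
    (by rw [← NNReal.coe_inj]; push_cast; norm_num) hq
  have h'' := (NNReal.coe_le_coe).2 h
  push_cast at h''
  calc ((1 + (x:ℝ)) / 2) ^ q = (1/2 * 1 + 1/2 * (x:ℝ)) ^ q := by ring_nf
    _ ≤ 1/2 * (1:ℝ) ^ q + 1/2 * (x:ℝ) ^ q := h''
    _ = (1 + (x:ℝ) ^ q) / 2 := by rw [Real.one_rpow]; ring

theorem G_min_at_one (p s : ℝ) (hp1 : 1 < p) (hp2 : p ≤ 2) (hs : 2 ≤ s)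
    (t : ℝ) (ht : t ∈ Set.Icc (0 : ℝ) 1) :
    (1 + t ^ s) ^ 2 / (1 + t ^ 2 - 2 * t * Real.cos (π / p)) ^ s ≥
      (4 : ℝ) ^ (1 - s) / Real.sin (π / (2 * p)) ^ (2 * s) := by
  obtain ⟨ht0, ht1⟩ := ht
  have hp0 : (0:ℝ) < p := by linarith
  have hpi : (0:ℝ) < π := Real.pi_pos
  set c := Real.cos (π / p) with hc
  have hc0 : c ≤ 0 := by
    apply Real.cos_nonpos_of_pi_div_two_le_of_le
    · rw [div_le_div_iff₀ (by norm_num) hp0]; nlinarith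
    · have : π / p ≤ π := by
        rw [div_le_iff₀ hp0]; nlinarith
      linarith
  -- sine value
  have hσsq : Real.sin (π / (2 * p)) ^ 2 = (1 - c) / 2 := by
    have h2 : 2 * (π / (2 * p)) = π / p := by field_simp
    rw [Real.sin_sq_eq_half_sub, h2, hc]; ring
  have hσpos : 0 < Real.sin (π / (2 * p)) := by
    apply Real.sin_pos_of_pos_of_lt_pi
    · positivity
    · rw [div_lt_iff₀ (by positivity)]; nlinarith
  set σ := Real.sin (π / (2 * p)) with hσ
  -- abbreviations
  have hts : 0 ≤ t ^ s := Real.rpow_nonneg ht0 s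
  set A := 1 + t ^ s with hA
  have hA1 : (1:ℝ) ≤ A := by simp only [hA]; linarith
  have hApos : (0:ℝ) < A := by linarith
  set D := 1 + t ^ 2 - 2 * t * c with hD
  have hDpos : (0:ℝ) < D := by
    have : (0:ℝ) ≤ -2 * t * c := by
      have := mul_nonneg ht0 (neg_nonneg.2 hc0)
      nlinarith
    nlinarith [sq_nonneg t]
  have hDle : D ≤ (1 - c) * (1 + t ^ 2) := by
    nlinarith [mul_nonneg (neg_nonneg.2 hc0) (sq_nonneg (1 - t))]
  set M := (1 + t ^ 2) / 2 with hM
  have hMpos : (0:ℝ) < M := by positivity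
  -- power mean : M ^ (s/2) ≤ A / 2
  have hpm : M ^ (s / 2) ≤ A / 2 := by
    have h1 : ((1 + t ^ 2) / 2) ^ (s / 2) ≤ (1 + (t ^ 2) ^ (s / 2)) / 2 :=
      aux_pm (t ^ 2) (s / 2) (by positivity) (by linarith)
    have h2 : (t ^ 2 : ℝ) ^ (s / 2) = t ^ s := by
      rw [← Real.rpow_natCast t 2, ← Real.rpow_mul ht0]
      norm_num
      congr 1
      ring
    rw [h2] at h1
    simpa [hM, hA] using h1
  have hMs : M ^ s ≤ (A / 2) ^ 2 := by
    have h3 : M ^ s = (M ^ (s / 2)) ^ 2 := by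
      rw [sq, ← Real.rpow_add hMpos]; ring_nf
    rw [h3]
    exact pow_le_pow_left₀ (Real.rpow_nonneg hMpos.le _) hpm 2
  have h1c : (0:ℝ) < 1 - c := by linarith
  have hK : (0:ℝ) < (2 * (1 - c)) ^ s := Real.rpow_pos_of_pos (by linarith) s
  -- bound D^s
  have hDs : D ^ s ≤ (2 * (1 - c)) ^ s * (A / 2) ^ 2 := by
    have h4 : D ^ s ≤ ((2 * (1 - c)) * M) ^ s := by
      apply Real.rpow_le_rpow hDpos.le _ (by linarith)
      rw [hM]; nlinarith
    have h5 : ((2 * (1 - c)) * M) ^ s = (2 * (1 - c)) ^ s * M ^ s :=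
      Real.mul_rpow (by linarith) hMpos.le
    calc D ^ s ≤ (2 * (1 - c)) ^ s * M ^ s := h4.trans_eq h5
      _ ≤ (2 * (1 - c)) ^ s * (A / 2) ^ 2 := by
          exact mul_le_mul_of_nonneg_left hMs hK.le
  have hDspos : (0:ℝ) < D ^ s := Real.rpow_pos_of_pos hDpos s
  -- main bound
  have hmain : A ^ 2 / D ^ s ≥ 4 / (2 * (1 - c)) ^ s := by
    have h6 : A ^ 2 / ((2 * (1 - c)) ^ s * (A / 2) ^ 2) ≤ A ^ 2 / D ^ s :=
      div_le_div_of_nonneg_left (by positivity) hDspos hDs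
    have h7 : A ^ 2 / ((2 * (1 - c)) ^ s * (A / 2) ^ 2) = 4 / (2 * (1 - c)) ^ s := by
      field_simp
      ring
    linarith [h6, h7.symm.le]
  -- compute RHS
  have hRHS : (4 : ℝ) ^ (1 - s) / σ ^ (2 * s) = 4 / (2 * (1 - c)) ^ s := by
    have h8 : σ ^ (2 * s) = ((1 - c) / 2) ^ s := by
      rw [Real.rpow_mul hσpos.le, Real.rpow_two, hσsq]
    have h9 : (4:ℝ) ^ (1 - s) = 4 / 4 ^ s := by
      rw [Real.rpow_sub (by norm_num), Real.rpow_one]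
    have h10 : ((1 - c) / 2 : ℝ) ^ s = (1 - c) ^ s / 2 ^ s :=
      Real.div_rpow h1c.le (by norm_num : (0:ℝ) ≤ 2) s
    have h11 : ((2:ℝ) * (1 - c)) ^ s = 2 ^ s * (1 - c) ^ s :=
      Real.mul_rpow (by norm_num) h1c.le
    have h12 : (4:ℝ) ^ s = 2 ^ s * 2 ^ s := by
      rw [show (4:ℝ) = 2 * 2 by norm_num, Real.mul_rpow (by norm_num) (by norm_num)]
    have h2pos : (0:ℝ) < (2:ℝ) ^ s := Real.rpow_pos_of_pos (by norm_num) s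
    have h1cpos : (0:ℝ) < (1 - c) ^ s := Real.rpow_pos_of_pos h1c s
    rw [h8, h9, h10, h11, h12]
    field_simp
  rw [hRHS]
  exact hmain
end

section
/- Let 1 < p ≤ 2. The function g(t) = sin(pt) − p·cos(t)·sin((p−1)t) is nonnegative on [π/(2p), π/2]. In particular g'(t) = p(2−p)cos(t)cos((p−1)t) ≥ 0 on this interval and g(π/(2p)) = 1 − p·cos²(π/(2p)) ≥ 0. -/
open Real

theorem g_nonneg_aux (p : ℝ) (hp1 : 1 < p) (hp2 : p ≤ 2) :
    (∀ t ∈ Set.Icc (π / (2 * p)) (π / 2),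
        0 ≤ Real.sin (p * t) - p * Real.cos t * Real.sin ((p - 1) * t)) ∧
    (∀ t ∈ Set.Icc (π / (2 * p)) (π / 2),
        HasDerivAt (fun u => Real.sin (p * u) - p * Real.cos u * Real.sin ((p - 1) * u))
          (p * (2 - p) * Real.cos t * Real.cos ((p - 1) * t)) t ∧
        0 ≤ p * (2 - p) * Real.cos t * Real.cos ((p - 1) * t)) ∧
    Real.sin (p * (π / (2 * p))) - p * Real.cos (π / (2 * p)) * Real.sin ((p - 1) * (π / (2 * p)))
      = 1 - p * Real.cos (π / (2 * p)) ^ 2 ∧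
    0 ≤ 1 - p * Real.cos (π / (2 * p)) ^ 2 := by
  have hp0 : 0 < p := lt_trans one_pos hp1
  have hpi : (0:ℝ) < π := Real.pi_pos
  set g : ℝ → ℝ := fun u => Real.sin (p * u) - p * Real.cos u * Real.sin ((p - 1) * u) with hg
  -- derivative at every point
  have hderiv : ∀ t : ℝ, HasDerivAt g (p * (2 - p) * Real.cos t * Real.cos ((p - 1) * t)) t := by
    intro t
    have h1 : HasDerivAt (fun u => Real.sin (p * u)) (Real.cos (p * t) * (p * 1)) t :=
      (Real.hasDerivAt_sin (p * t)).comp t ((hasDerivAt_id t).const_mul p)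
    have h3 : HasDerivAt (fun u => Real.sin ((p - 1) * u)) (Real.cos ((p - 1) * t) * ((p - 1) * 1)) t :=
      (Real.hasDerivAt_sin ((p - 1) * t)).comp t ((hasDerivAt_id t).const_mul (p - 1))
    have h2 : HasDerivAt (fun u => Real.cos u * Real.sin ((p - 1) * u))
        (-Real.sin t * Real.sin ((p - 1) * t) + Real.cos t * (Real.cos ((p - 1) * t) * ((p - 1) * 1))) t :=
      (Real.hasDerivAt_cos t).mul h3
    have h4 := h1.sub ((h2.const_mul p))
    have hcos : Real.cos (p * t)
        = Real.cos t * Real.cos ((p - 1) * t) - Real.sin t * Real.sin ((p - 1) * t) := by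
      rw [show p * t = t + (p - 1) * t by ring, Real.cos_add]
    convert h4 using 1
    · ext u; simp [hg]
    · rfl
    · funext u; simp only [hg, Pi.sub_apply]; ring
    · rw [hcos]; ring
  have hle : π / (2 * p) ≤ π / 2 := by
    apply div_le_div_of_nonneg_left hpi.le (by norm_num) (by linarith)
  -- sign of derivative
  have hsign : ∀ t ∈ Set.Icc (π / (2 * p)) (π / 2),
      0 ≤ p * (2 - p) * Real.cos t * Real.cos ((p - 1) * t) := by
    intro t ht
    obtain ⟨ht1, ht2⟩ := ht
    have ht0 : 0 ≤ t := le_trans (by positivity) ht1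
    have hc1 : 0 ≤ Real.cos t :=
      Real.cos_nonneg_of_mem_Icc ⟨by linarith [Real.pi_pos], ht2⟩
    have hc2 : 0 ≤ Real.cos ((p - 1) * t) := by
      apply Real.cos_nonneg_of_mem_Icc
      constructor
      · nlinarith
      · nlinarith
    have : 0 ≤ p * (2 - p) := by nlinarith
    positivity
  -- endpoint value
  have hval : g (π / (2 * p)) = 1 - p * Real.cos (π / (2 * p)) ^ 2 := by
    have h1 : p * (π / (2 * p)) = π / 2 := by field_simp
    have h2 : (p - 1) * (π / (2 * p)) = π / 2 - π / (2 * p) := by field_simp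
    simp only [hg, h1, h2, Real.sin_pi_div_two, Real.sin_pi_div_two_sub]
    ring
  -- endpoint nonneg
  have hnn : 0 ≤ 1 - p * Real.cos (π / (2 * p)) ^ 2 := by
    have h2a : 2 * (π / (2 * p)) = π / p := by field_simp
    have hsq : Real.cos (π / (2 * p)) ^ 2 = 1 / 2 + Real.cos (π / p) / 2 := by
      rw [Real.cos_sq, h2a]
    have hcn : Real.cos (π / p) ≤ 0 := by
      apply Real.cos_nonpos_of_pi_div_two_le_of_le
      · rw [div_le_div_iff₀ (by norm_num) hp0]; nlinarith
      · have : π / p ≤ π := by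
          rw [div_le_iff₀ hp0]; nlinarith
        linarith
    rw [hsq]
    nlinarith
  refine ⟨?_, fun t ht => ⟨hderiv t, hsign t ht⟩, hval, hnn⟩
  -- monotonicity
  have hmono : MonotoneOn g (Set.Icc (π / (2 * p)) (π / 2)) := by
    apply monotoneOn_of_deriv_nonneg (convex_Icc _ _)
      (fun t _ => (hderiv t).continuousAt.continuousWithinAt)
      (fun t _ => (hderiv t).differentiableAt.differentiableWithinAt)
    intro t ht
    rw [interior_Icc] at ht
    rw [(hderiv t).deriv]
    exact hsign t ⟨ht.1.le, ht.2.le⟩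
  intro t ht
  have h0 : (0:ℝ) ≤ g (π / (2 * p)) := by rw [hval]; exact hnn
  exact le_trans h0 (hmono (Set.left_mem_Icc.2 hle) ht ht.1)
end

section
/- Let 1 < p ≤ 2. For every t ∈ (0, π/2], (1 − cot(π/(2p))·cos(pt)) / sin^p(t) ≥ 1 / sin^p(π/(2p)). -/
set_option maxHeartbeats 1000000


open Real

theorem case_r_eq_one (p : ℝ) (hp1 : 1 < p) (hp2 : p ≤ 2)
    (t : ℝ) (ht1 : 0 < t) (ht2 : t ≤ π / 2) :
    (1 - Real.cot (π / (2 * p)) * Real.cos (p * t)) / Real.sin t ^ p ≥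
      1 / Real.sin (π / (2 * p)) ^ p := by
  have hp0 : 0 < p := by linarith
  have hπ := Real.pi_pos
  set a : ℝ := π / (2 * p) with ha_def
  have ha_pos : 0 < a := by positivity
  have ha_lt : a < π / 2 := by
    rw [ha_def, div_lt_div_iff₀ (by positivity) (by norm_num)]
    nlinarith
  have ha_ge : π / 4 ≤ a := by
    rw [ha_def, div_le_div_iff₀ (by norm_num) (by positivity)]
    nlinarith
  have hpa : p * a = π / 2 := by
    rw [ha_def]; field_simp
  have hsa : 0 < Real.sin a := Real.sin_pos_of_pos_of_lt_pi ha_pos (by linarith)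
  have hca : 0 < Real.cos a := Real.cos_pos_of_mem_Ioo ⟨by linarith, ha_lt⟩
  set c : ℝ := Real.cot a with hc_def
  have hc_eq : c = Real.cos a / Real.sin a := Real.cot_eq_cos_div_sin a
  have hc_nonneg : 0 ≤ c := by rw [hc_eq]; positivity
  -- key : cos a ≤ sin a, hence (p-1) * c ≤ 1
  have hcs : Real.cos a ≤ Real.sin a := by
    have := Real.cos_le_cos_of_nonneg_of_le_pi (x := π / 2 - a) (y := a)
      (by linarith) (by linarith) (by linarith)
    rwa [Real.cos_pi_div_two_sub] at this
  have hkey : (p - 1) * c ≤ 1 := by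
    rw [hc_eq, ← mul_div_assoc, div_le_one hsa]
    nlinarith
  -- the auxiliary function u
  set u : ℝ → ℝ := fun s => c * Real.cos ((p - 1) * s) - Real.cos s with hu_def
  have hu_deriv : ∀ s : ℝ, HasDerivAt u
      (Real.sin s - c * ((p - 1) * Real.sin ((p - 1) * s))) s := by
    intro s
    have h1 : HasDerivAt (fun s : ℝ => (p - 1) * s) (p - 1) s := by
      simpa using (hasDerivAt_id s).const_mul (p - 1)
    have h2 : HasDerivAt (fun s : ℝ => Real.cos ((p - 1) * s))
        (-Real.sin ((p - 1) * s) * (p - 1)) s :=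
      (Real.hasDerivAt_cos ((p - 1) * s)).comp s h1
    have h3 := (h2.const_mul c).sub (Real.hasDerivAt_cos s)
    exact h3.congr_deriv (by ring)
  have hu_mono : MonotoneOn u (Set.Icc 0 (π / 2)) := by
    apply monotoneOn_of_deriv_nonneg (convex_Icc _ _)
    · exact fun s _ => (hu_deriv s).differentiableAt.continuousAt.continuousWithinAt
    · exact fun s _ => (hu_deriv s).differentiableAt.differentiableWithinAt
    · intro s hs
      rw [interior_Icc] at hs
      rw [(hu_deriv s).deriv]
      have hs0 : (0:ℝ) ≤ s := le_of_lt hs.1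
      have hps0 : 0 ≤ (p - 1) * s := by nlinarith
      have hsin_nonneg : 0 ≤ Real.sin ((p - 1) * s) :=
        Real.sin_nonneg_of_nonneg_of_le_pi hps0 (by nlinarith [hs.2])
      have hsin_le : Real.sin ((p - 1) * s) ≤ Real.sin s := by
        apply Real.strictMonoOn_sin.monotoneOn ⟨by linarith, by nlinarith [hs.2]⟩
          ⟨by linarith, le_of_lt hs.2⟩
        nlinarith
      nlinarith [mul_le_mul hkey hsin_le hsin_nonneg (by norm_num : (0:ℝ) ≤ 1),
        mul_nonneg (mul_nonneg (by linarith : (0:ℝ) ≤ p - 1) hc_nonneg) hsin_nonneg]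
  have hua : u a = 0 := by
    have : (p - 1) * a = π / 2 - a := by rw [sub_mul, one_mul, hpa]
    rw [hu_def]
    simp only
    rw [this, Real.cos_pi_div_two_sub, hc_eq]
    field_simp
    ring
  -- the function φ and its derivative
  set φ : ℝ → ℝ := fun s => (1 - c * Real.cos (p * s)) / Real.sin s ^ p with hφ_def
  have hφ_deriv : ∀ s : ℝ, 0 < Real.sin s →
      HasDerivAt φ (p * Real.sin s ^ (p - 1) * u s / (Real.sin s ^ p) ^ 2) s := by
    intro s hss
    have h1 : HasDerivAt (fun s : ℝ => p * s) p s := by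
      simpa using (hasDerivAt_id s).const_mul p
    have hF : HasDerivAt (fun s : ℝ => 1 - c * Real.cos (p * s))
        (c * Real.sin (p * s) * p) s := by
      have hh := (hasDerivAt_const s (1:ℝ)).sub
        (((Real.hasDerivAt_cos (p * s)).comp s h1).const_mul c)
      refine hh.congr_deriv ?_
      ring
    have hG : HasDerivAt (fun s : ℝ => Real.sin s ^ p)
        (Real.cos s * p * Real.sin s ^ (p - 1)) s :=
      (Real.hasDerivAt_sin s).rpow_const (Or.inl (ne_of_gt hss))
    have hG0 : Real.sin s ^ p ≠ 0 := by positivity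
    have h := hF.div hG hG0
    refine h.congr_deriv ?_
    have hsplit : Real.sin s ^ p = Real.sin s ^ (p - 1) * Real.sin s := by
      rw [← Real.rpow_add_one (ne_of_gt hss)]; ring_nf
    have hcos : Real.cos ((p - 1) * s) =
        Real.cos (p * s) * Real.cos s + Real.sin (p * s) * Real.sin s := by
      have : (p - 1) * s = p * s - s := by ring
      rw [this, Real.cos_sub]
    simp only [hu_def]
    rw [hcos, hsplit]
    ring
  -- value at a
  have hφa : φ a = 1 / Real.sin a ^ p := by
    rw [hφ_def]
    simp only
    rw [hpa, Real.cos_pi_div_two, mul_zero, sub_zero]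
  -- positivity of sin on our interval
  have hsin_pos : ∀ s : ℝ, 0 < s → s ≤ π / 2 → 0 < Real.sin s := fun s h1 h2 =>
    Real.sin_pos_of_pos_of_lt_pi h1 (by linarith)
  have main : φ t ≥ φ a := by
    rcases lt_trichotomy t a with hlt | heq | hgt
    · -- t < a : φ antitone on [t, a]
      have hanti : AntitoneOn φ (Set.Icc t a) := by
        apply antitoneOn_of_deriv_nonpos (convex_Icc _ _)
        · intro s hs
          exact (hφ_deriv s (hsin_pos s (lt_of_lt_of_le ht1 hs.1)
            (le_trans hs.2 (le_of_lt ha_lt)))).differentiableAt.continuousAt.continuousWithinAt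
        · intro s hs
          rw [interior_Icc] at hs
          exact (hφ_deriv s (hsin_pos s (lt_trans ht1 hs.1)
            (le_of_lt (lt_trans hs.2 ha_lt)))).differentiableAt.differentiableWithinAt
        · intro s hs
          rw [interior_Icc] at hs
          have hss : 0 < Real.sin s := hsin_pos s (lt_trans ht1 hs.1)
            (le_of_lt (lt_trans hs.2 ha_lt))
          rw [(hφ_deriv s hss).deriv]
          have hus : u s ≤ 0 := by
            have := hu_mono (Set.mem_Icc.mpr ⟨by linarith [hs.1], by linarith [hs.2]⟩)
              (Set.mem_Icc.mpr ⟨le_of_lt ha_pos, le_of_lt ha_lt⟩) (le_of_lt hs.2)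
            rwa [hua] at this
          apply div_nonpos_of_nonpos_of_nonneg
          · have : (0:ℝ) ≤ p * Real.sin s ^ (p - 1) := by positivity
            nlinarith
          · positivity
      exact hanti (Set.mem_Icc.mpr ⟨le_refl t, le_of_lt hlt⟩)
        (Set.mem_Icc.mpr ⟨le_of_lt hlt, le_refl a⟩) (le_of_lt hlt)
    · rw [heq]
    · -- a < t : φ monotone on [a, t]
      have hmono : MonotoneOn φ (Set.Icc a t) := by
        apply monotoneOn_of_deriv_nonneg (convex_Icc _ _)
        · intro s hs
          exact (hφ_deriv s (hsin_pos s (lt_of_lt_of_le ha_pos hs.1)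
            (le_trans hs.2 ht2))).differentiableAt.continuousAt.continuousWithinAt
        · intro s hs
          rw [interior_Icc] at hs
          exact (hφ_deriv s (hsin_pos s (lt_trans ha_pos hs.1)
            (le_trans (le_of_lt hs.2) ht2))).differentiableAt.differentiableWithinAt
        · intro s hs
          rw [interior_Icc] at hs
          have hss : 0 < Real.sin s := hsin_pos s (lt_trans ha_pos hs.1)
            (le_trans (le_of_lt hs.2) ht2)
          rw [(hφ_deriv s hss).deriv]
          have hus : 0 ≤ u s := by
            have := hu_mono (Set.mem_Icc.mpr ⟨le_of_lt ha_pos, le_of_lt ha_lt⟩)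
              (Set.mem_Icc.mpr ⟨by linarith [hs.1], by linarith [hs.2]⟩) (le_of_lt hs.1)
            rwa [hua] at this
          apply div_nonneg _ (by positivity)
          have : (0:ℝ) ≤ p * Real.sin s ^ (p - 1) := by positivity
          nlinarith
      exact hmono (Set.mem_Icc.mpr ⟨le_refl a, le_of_lt hgt⟩)
        (Set.mem_Icc.mpr ⟨le_of_lt hgt, le_refl t⟩) (le_of_lt hgt)
  calc (1 - Real.cot a * Real.cos (p * t)) / Real.sin t ^ p = φ t := rfl
    _ ≥ φ a := main
    _ = 1 / Real.sin a ^ p := hφa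
end

section
/- Let s ≥ p > 1 and p ≤ 2. Then for all t with 0 ≤ t ≤ π − π/p, (1 − 2/s)·sin((π − t)p/2) + sin(t + (π − t)p/2) ≥ 0. -/
open Real

theorem stationary_aux_small_p (p s : ℝ) (hp1 : 1 < p) (hp2 : p ≤ 2) (hs : p ≤ s)
    (t : ℝ) (ht1 : 0 ≤ t) (ht2 : t ≤ π - π / p) :
    0 ≤ (1 - 2 / s) * Real.sin ((π - t) * p / 2) + Real.sin (t + (π - t) * p / 2) := by
  have hπ := Real.pi_pos
  have hp0 : 0 < p := by linarith
  have hs0 : 0 < s := by linarith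
  set θ := (π - t) * p / 2 with hθdef
  have hπp : 0 < π / p := by positivity
  have hπt : π / p ≤ π - t := by linarith
  have hπt0 : 0 < π - t := lt_of_lt_of_le hπp hπt
  have hθ0 : 0 ≤ θ := by positivity
  have hθπ : θ ≤ π := by
    rw [hθdef]
    nlinarith
  have hsinθ : 0 ≤ Real.sin θ := Real.sin_nonneg_of_nonneg_of_le_pi hθ0 hθπ
  have h2s2p : 2 / s ≤ 2 / p := by
    apply div_le_div_of_nonneg_left (by norm_num) hp0 hs
  rcases eq_or_lt_of_le ht1 with h0 | h0
  · -- t = 0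
    rw [← h0]
    have : 2 / s ≤ 2 := by
      rw [div_le_iff₀ hs0]; linarith
    simp only [zero_add]
    nlinarith
  · -- t > 0
    have hθltπ : θ < π := by
      rw [hθdef]; nlinarith
    have hd : 0 < π - θ := by linarith
    set b := t / (π - θ) with hbdef
    have hb0 : 0 ≤ b := by positivity
    have hb1 : b ≤ 1 := by
      rw [hbdef, div_le_one hd, hθdef]
      nlinarith
    have ha0 : 0 ≤ 1 - b := by linarith
    have hbt : b * (π - θ) = t := by
      rw [hbdef]; field_simp
    have hcomb : (1 - b) * θ + b * π = t + θ := by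
      have e : (1 - b) * θ + b * π = θ + b * (π - θ) := by ring
      rw [e, hbt]; ring
    have key := (strictConcaveOn_sin_Icc.concaveOn).2
      (Set.mem_Icc.mpr ⟨hθ0, hθπ⟩) (Set.mem_Icc.mpr ⟨le_of_lt hπ, le_refl π⟩)
      ha0 hb0 (by ring)
    simp only [smul_eq_mul, Real.sin_pi, mul_zero, add_zero, hcomb] at key
    -- key : (1 - b) * sin θ ≤ sin (t + θ)
    have hA : π ≤ (π - t) * p := (div_le_iff₀ hp0).mp hπt
    have ha : 2 / p - 1 ≤ 1 - b := by
      have h1 : t / (π - θ) ≤ 2 - 2 / p := by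
        rw [div_le_iff₀ hd]
        have h2 : 2 - 2 / p = (2 * p - 2) / p := by field_simp
        rw [h2, div_mul_eq_mul_div, le_div_iff₀ hp0, hθdef]
        nlinarith [mul_nonneg (by linarith : (0:ℝ) ≤ 2 - p)
          (by linarith : (0:ℝ) ≤ (π - t) * p - π)]
      rw [hbdef]; linarith
    nlinarith [mul_le_mul_of_nonneg_right ha hsinθ]
end

section
/- For real s with 1 < s ≤ 2 and all r ∈ (0, 1), (1 − r^(2−s)) / (r − r^(1−s)) ≥ 1 − 2/s. -/
open Real

lemma key_ratio (s : ℝ) (hs1 : 1 < s) (hs2 : s ≤ 2) :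
    ∀ x ∈ Set.Ioi (0:ℝ), ∀ y ∈ Set.Ioi (0:ℝ), x ≤ y →
      (s-2)*y^s - s*y^(s-1) + s*y ≤ (s-2)*x^s - s*x^(s-1) + s*x := by
  have hs0 : (0:ℝ) < s := by linarith
  have hF : AntitoneOn (fun x : ℝ => (s-2)*x^s - s*x^(s-1) + s*x) (Set.Ioi 0) := by
    have hderiv : ∀ x ∈ Set.Ioi (0:ℝ), HasDerivAt
        (fun x : ℝ => (s-2)*x^s - s*x^(s-1) + s*x)
        ((s-2)*(s*x^(s-1)) - s*((s-1)*x^(s-1-1)) + s) x := by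
      intro x hx
      have hx0 : x ≠ 0 := ne_of_gt hx
      have h1 := (Real.hasDerivAt_rpow_const (p := s) (Or.inl hx0)).const_mul (s-2)
      have h2 := (Real.hasDerivAt_rpow_const (p := s-1) (Or.inl hx0)).const_mul s
      have h3 : HasDerivAt (fun x : ℝ => s*x) s x := by
        simpa using (hasDerivAt_id x).const_mul s
      exact (h1.sub h2).add h3
    apply antitoneOn_of_deriv_nonpos (convex_Ioi 0)
    · intro x hx
      exact ((hderiv x hx).continuousAt).continuousWithinAt
    · rw [interior_Ioi]
      intro x hx
      exact ((hderiv x hx).differentiableAt).differentiableWithinAt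
    · rw [interior_Ioi]
      intro x hx
      rw [(hderiv x hx).deriv]
      have hx0 : (0:ℝ) < x := hx
      -- AM-GM : 1 = x^((s-2)*(s-1)) * x^((s-1)*(2-s)) ≤ (s-1)*x^(s-2) + (2-s)*x^(s-1)
      have hgm := Real.geom_mean_le_arith_mean2_weighted (w₁ := s-1) (w₂ := 2-s)
        (p₁ := x^(s-2)) (p₂ := x^(s-1)) (by linarith) (by linarith)
        (Real.rpow_nonneg hx0.le _) (Real.rpow_nonneg hx0.le _) (by ring)
      have hlhs : (x^(s-2))^(s-1) * (x^(s-1))^(2-s) = 1 := by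
        rw [← Real.rpow_mul hx0.le, ← Real.rpow_mul hx0.le, ← Real.rpow_add hx0]
        rw [show (s-2)*(s-1) + (s-1)*(2-s) = 0 by ring, Real.rpow_zero]
      rw [hlhs] at hgm
      have he : s - 1 - 1 = s - 2 := by ring
      rw [he]
      nlinarith [hs0.le, Real.rpow_nonneg hx0.le (s-2), Real.rpow_nonneg hx0.le (s-1)]
  intro x hx y hy hxy
  exact hF hx hy hxy

theorem ratio_ge (s : ℝ) (hs1 : 1 < s) (hs2 : s ≤ 2)
    (r : ℝ) (hr1 : 0 < r) (hr2 : r < 1) :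
    (1 - r ^ (2 - s)) / (r - r ^ (1 - s)) ≥ 1 - 2 / s := by
  have hs0 : (0:ℝ) < s := by linarith
  have hr1s : (1:ℝ) < r ^ (1 - s) := by
    rw [Real.one_lt_rpow_iff_of_pos hr1]
    right; exact ⟨hr2, by linarith⟩
  have hd : r - r ^ (1 - s) < 0 := by linarith
  have hkey := key_ratio s hs1 hs2 r (Set.mem_Ioi.mpr hr1) 1 (Set.mem_Ioi.mpr one_pos) hr2.le
  simp only [Real.one_rpow, mul_one] at hkey
  -- hkey : s - 2 - s + s ≤ (s-2)*r^s - s*r^(s-1) + s*r, i.e.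
  have hkey' : s - 2 ≤ (s-2)*r^s - s*r^(s-1) + s*r := by linarith
  have hp : (0:ℝ) < r ^ (s-1) := Real.rpow_pos_of_pos hr1 _
  have h1 : r ^ (s-1) * r ^ (2-s) = r := by
    rw [← Real.rpow_add hr1, show s-1+(2-s) = 1 by ring, Real.rpow_one]
  have h2 : r ^ (s-1) * r ^ (1-s) = 1 := by
    rw [← Real.rpow_add hr1, show s-1+(1-s) = 0 by ring, Real.rpow_zero]
  have h3 : r ^ (s-1) * r = r ^ s := by
    have : r ^ (s-1) * r ^ (1:ℝ) = r ^ s := by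
      rw [← Real.rpow_add hr1]; norm_num
    rwa [Real.rpow_one] at this
  rw [ge_iff_le, le_div_iff_of_neg hd]
  -- goal : (1 - r^(2-s)) ≤ (1 - 2/s) * (r - r^(1-s))
  rw [show (1:ℝ) - 2/s = (s-2)/s by field_simp, div_mul_eq_mul_div, le_div_iff₀ hs0]
  -- goal : (1 - r^(2-s)) * s ≤ (s-2) * (r - r^(1-s))
  have := mul_le_mul_of_nonneg_right hkey' hp.le
  nlinarith [this, h1, h2, h3, hp]
end

section
/- For 1 < p ≤ 2 and all r ∈ [0, 1], ((1−r)² + 2r·sin(π/(2p)))^(p/2) / (1 + r^p) ≤ 1. -/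
open Real

theorem F_le_one (p : ℝ) (hp1 : 1 < p) (hp2 : p ≤ 2)
    (r : ℝ) (hr : r ∈ Set.Icc (0 : ℝ) 1) :
    ((1 - r) ^ 2 + 2 * r * Real.sin (π / (2 * p))) ^ (p / 2) / (1 + r ^ p) ≤ 1 := by
  obtain ⟨hr0, hr1⟩ := hr
  have hp0 : 0 < p := by linarith
  have hs1 : Real.sin (π / (2 * p)) ≤ 1 := Real.sin_le_one _
  have hs0 : 0 ≤ Real.sin (π / (2 * p)) := by
    apply Real.sin_nonneg_of_nonneg_of_le_pi
    · positivity
    · rw [div_le_iff₀ (by positivity)]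
      nlinarith [Real.pi_pos]
  have hA0 : 0 ≤ (1 - r) ^ 2 + 2 * r * Real.sin (π / (2 * p)) := by positivity
  have hA : (1 - r) ^ 2 + 2 * r * Real.sin (π / (2 * p)) ≤ 1 + r ^ 2 := by nlinarith
  have h1 : ((1 - r) ^ 2 + 2 * r * Real.sin (π / (2 * p))) ^ (p / 2)
      ≤ (1 + r ^ 2) ^ (p / 2) := Real.rpow_le_rpow hA0 hA (by positivity)
  have key : ((1 : ℝ) + r ^ 2) ^ (p / 2) ≤ (1 : ℝ) ^ (p / 2) + (r ^ 2) ^ (p / 2) := by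
    have hx : (0 : ℝ) ≤ 1 := zero_le_one
    have hy : (0 : ℝ) ≤ r ^ 2 := by positivity
    have := NNReal.rpow_add_le_add_rpow (p := p / 2) (⟨1, hx⟩ : NNReal) (⟨r ^ 2, hy⟩ : NNReal)
      (by positivity) (by linarith)
    exact_mod_cast this
  have h2 : ((r : ℝ) ^ 2) ^ (p / 2) = r ^ p := by
    rw [← Real.rpow_natCast r 2, ← Real.rpow_mul hr0]
    norm_num
    congr 1
    ring
  have hrp : (0 : ℝ) ≤ r ^ p := Real.rpow_nonneg hr0 p
  rw [div_le_one (by linarith)]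
  rw [Real.one_rpow, h2] at key
  linarith
end

section
/- For all real p with 4/3 ≤ p ≤ 2, (1 + cot(π/(2p)))^(1 − p/2) ≤ 2^(p−1) · sin^p(π/(2p)). -/
open Real

set_option maxHeartbeats 1000000 in
lemma Pnice_neg (u s c : ℝ) (hu0 : 0 < u) (hu1 : u ≤ 0.786)
    (h1 : u - u^3/4 ≤ s) (h2 : s ≤ u) (hs0 : 0 ≤ s)
    (h3 : 1 - u^2/2 ≤ c) (h4 : c ≤ 1) (hsc : s^2 + c^2 = 1) :
    -(142699/62500 : ℝ)*(1+c+s*c) + (107301/62500)*s + 4*s^2 + 2*u*(1+s)*(s-c) < 0 := by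
  have hu2 : u^2 ≤ 0.618 := by nlinarith
  have hq : (0:ℝ) ≤ 1 - u^2/2 := by linarith
  have hc0 : (0:ℝ) ≤ c := by linarith
  have e1 : s^2 ≤ u^2 - u^4/4 := by nlinarith [mul_le_mul h3 h3 hq hc0]
  have e2 : 2*u*(1+s)*(s-c) ≤ 2*u*(1+s)*(u-1+u^2/2) := by
    have hf : (0:ℝ) ≤ 2*u*(1+s) := by positivity
    have hsc2 : s - c ≤ u - 1 + u^2/2 := by linarith
    nlinarith [mul_le_mul_of_nonneg_left hsc2 hf]
  have e3 : -(142699/62500 : ℝ)*(1+c+s*c) ≤ -(142699/62500)*(1+(1+s)*(1-u^2/2)) := by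
    have : (1-u^2/2)*(1+s) ≤ c*(1+s) := by
      apply mul_le_mul_of_nonneg_right h3; linarith
    nlinarith [this]
  have g_neg : -(142699/62500 : ℝ)*(1-u^2/2) + 2*u*(u-1+u^2/2) < 0 := by nlinarith
  have e4 : (1+s)*(-(142699/62500 : ℝ)*(1-u^2/2) + 2*u*(u-1+u^2/2)) ≤ 1*(-(142699/62500)*(1-u^2/2) + 2*u*(u-1+u^2/2)) := by
    apply mul_le_mul_of_nonpos_right _ g_neg.le
    linarith
  have hBs : (107301/62500 : ℝ)*s ≤ (107301/62500)*u := by nlinarith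
  have final : -(142699/62500 : ℝ) + (107301/62500)*u + 4*(u^2 - u^4/4) + (-(142699/62500)*(1-u^2/2) + 2*u*(u-1+u^2/2)) < 0 := by
    nlinarith [mul_nonneg (mul_nonneg hu0.le hu0.le) (by linarith : (0:ℝ) ≤ 0.786 - u), mul_nonneg hu0.le (by linarith : (0:ℝ) ≤ 0.786 - u), sq_nonneg u, mul_nonneg (mul_nonneg (mul_nonneg hu0.le hu0.le) hu0.le) (by linarith : (0:ℝ) ≤ 0.786 - u)]
  nlinarith [e1, e2, e3, e4, final, hBs]

lemma Pfull_neg (u s c : ℝ) (hu0 : 0 < u) (hu1 : u ≤ 0.786)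
    (h1 : u - u^3/4 ≤ s) (h2 : s ≤ u) (hs0 : 0 ≤ s)
    (h3 : 1 - u^2/2 ≤ c) (h4 : c ≤ 1) (hsc : s^2 + c^2 = 1) :
    (4*c - π - 2*u)*(1+s+c)^2 - 4*(c-s)*(1+s)*(1+s+c) + 2*u*(2+s+c)*(1+s) < 0 := by
  have hpi : (3141592/1000000 : ℝ) < π := by
    have := Real.pi_gt_d6; norm_num at this ⊢; linarith
  have hPa : (4*c - 3141592/1000000 - 2*u)*(1+s+c)^2 - 4*(c-s)*(1+s)*(1+s+c) + 2*u*(2+s+c)*(1+s)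
      = -(142699/62500 : ℝ)*(1+c+s*c) + (107301/62500)*s + 4*s^2 + 2*u*(1+s)*(s-c) := by
    linear_combination (107301/125000 + 4*c + 4*s - 2*u) * hsc
  have hnice := Pnice_neg u s c hu0 hu1 h1 h2 hs0 h3 h4 hsc
  nlinarith [sq_nonneg (1+s+c), hpi, hPa, hnice]

noncomputable def Ff : ℝ → ℝ := fun u =>
  (π + 2*u) * Real.log (1 + Real.sin u) - 2*u * Real.log (2 + 2*Real.sin u + 2*Real.cos u)

noncomputable def Ff1 : ℝ → ℝ := fun u =>
  (2 * Real.log (1 + Real.sin u) + (π + 2*u) * (Real.cos u / (1 + Real.sin u)))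
  - (2 * Real.log (2 + 2*Real.sin u + 2*Real.cos u)
     + 2*u * ((2*Real.cos u + 2*(-Real.sin u)) / (2 + 2*Real.sin u + 2*Real.cos u)))

noncomputable def Ff2 : ℝ → ℝ := fun u =>
  (2 * (Real.cos u / (1 + Real.sin u))
    + (2 * (Real.cos u / (1 + Real.sin u))
      + (π + 2*u) * ((-Real.sin u * (1 + Real.sin u) - Real.cos u * Real.cos u) / (1 + Real.sin u)^2)))
  - (2 * ((2*Real.cos u + 2*(-Real.sin u)) / (2 + 2*Real.sin u + 2*Real.cos u))
    + (2 * ((2*Real.cos u + 2*(-Real.sin u)) / (2 + 2*Real.sin u + 2*Real.cos u))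
      + 2*u * (((2*(-Real.sin u) + 2*(-Real.cos u)) * (2 + 2*Real.sin u + 2*Real.cos u)
          - (2*Real.cos u + 2*(-Real.sin u)) * (2*Real.cos u + 2*(-Real.sin u)))
            / (2 + 2*Real.sin u + 2*Real.cos u)^2)))

lemma den1 (u : ℝ) : HasDerivAt (fun x : ℝ => 1 + Real.sin x) (Real.cos u) u :=
  (Real.hasDerivAt_sin u).const_add 1

lemma den2 (u : ℝ) : HasDerivAt (fun x : ℝ => 2 + 2*Real.sin x + 2*Real.cos x)
    (2*Real.cos u + 2*(-Real.sin u)) u :=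
  (((Real.hasDerivAt_sin u).const_mul 2).const_add 2).add ((Real.hasDerivAt_cos u).const_mul 2)

lemma hasDeriv1 (u : ℝ) (h1 : (1:ℝ) + Real.sin u ≠ 0)
    (h2 : (2:ℝ) + 2*Real.sin u + 2*Real.cos u ≠ 0) : HasDerivAt Ff (Ff1 u) u := by
  have hA : HasDerivAt (fun x : ℝ => π + 2*x) 2 u := by
    simpa using ((hasDerivAt_id u).const_mul 2).const_add π
  have hC : HasDerivAt (fun x : ℝ => 2*x) 2 u := by
    simpa using (hasDerivAt_id u).const_mul 2
  have hB : HasDerivAt (fun x : ℝ => Real.log (1 + Real.sin x))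
      (Real.cos u / (1 + Real.sin u)) u := (den1 u).log h1
  have hD : HasDerivAt (fun x : ℝ => Real.log (2 + 2*Real.sin x + 2*Real.cos x))
      ((2*Real.cos u + 2*(-Real.sin u)) / (2 + 2*Real.sin u + 2*Real.cos u)) u := (den2 u).log h2
  exact (hA.mul hB).sub (hC.mul hD)

lemma hasDeriv2 (u : ℝ) (h1 : (1:ℝ) + Real.sin u ≠ 0)
    (h2 : (2:ℝ) + 2*Real.sin u + 2*Real.cos u ≠ 0) : HasDerivAt Ff1 (Ff2 u) u := by
  have hA : HasDerivAt (fun x : ℝ => π + 2*x) 2 u := by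
    simpa using ((hasDerivAt_id u).const_mul 2).const_add π
  have hC : HasDerivAt (fun x : ℝ => 2*x) 2 u := by
    simpa using (hasDerivAt_id u).const_mul 2
  have hB : HasDerivAt (fun x : ℝ => Real.log (1 + Real.sin x))
      (Real.cos u / (1 + Real.sin u)) u := (den1 u).log h1
  have hD : HasDerivAt (fun x : ℝ => Real.log (2 + 2*Real.sin x + 2*Real.cos x))
      ((2*Real.cos u + 2*(-Real.sin u)) / (2 + 2*Real.sin u + 2*Real.cos u)) u := (den2 u).log h2
  have hq1 : HasDerivAt (fun x : ℝ => Real.cos x / (1 + Real.sin x))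
      ((-Real.sin u * (1 + Real.sin u) - Real.cos u * Real.cos u) / (1 + Real.sin u)^2) u :=
    (Real.hasDerivAt_cos u).div (den1 u) h1
  have hnum : HasDerivAt (fun x : ℝ => 2*Real.cos x + 2*(-Real.sin x))
      (2*(-Real.sin u) + 2*(-Real.cos u)) u :=
    ((Real.hasDerivAt_cos u).const_mul 2).add (((Real.hasDerivAt_sin u).neg).const_mul 2)
  have hq2 : HasDerivAt (fun x : ℝ => (2*Real.cos x + 2*(-Real.sin x)) / (2 + 2*Real.sin x + 2*Real.cos x))
      (((2*(-Real.sin u) + 2*(-Real.cos u)) * (2 + 2*Real.sin u + 2*Real.cos u)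
          - (2*Real.cos u + 2*(-Real.sin u)) * (2*Real.cos u + 2*(-Real.sin u)))
            / (2 + 2*Real.sin u + 2*Real.cos u)^2) u := hnum.div (den2 u) h2
  exact ((hB.const_mul 2).add (hA.mul hq1)).sub ((hD.const_mul 2).add (hC.mul hq2))

lemma Ff2_neg (u : ℝ) (hu : u ∈ Set.Ioo 0 (π/4)) : Ff2 u < 0 := by
  obtain ⟨hu0, hu4⟩ := hu
  have hpi : π < 3.1416 := by linarith [Real.pi_lt_d6]
  have hu786 : u ≤ 0.786 := by linarith
  have hu1 : u ≤ 1 := by linarith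
  set s := Real.sin u with hs_def
  set c := Real.cos u with hc_def
  have hs_pos : 0 < s := Real.sin_pos_of_pos_of_lt_pi hu0 (by linarith [Real.pi_gt_three])
  have hc_pos : 0 < c := Real.cos_pos_of_mem_Ioo ⟨by linarith [Real.pi_gt_three], by linarith [Real.pi_gt_three]⟩
  have h2 : s ≤ u := Real.sin_le hu0.le
  have h1 : u - u^3/4 ≤ s := le_of_lt (lt_of_le_of_lt (by nlinarith [pow_pos hu0 3]) (Real.sin_gt_sub_cube hu0))
  have h3 : 1 - u^2/2 ≤ c := Real.one_sub_sq_div_two_le_cos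
  have h4 : c ≤ 1 := Real.cos_le_one u
  have hsc : s^2 + c^2 = 1 := Real.sin_sq_add_cos_sq u
  have hden1 : (0:ℝ) < 1 + s := by linarith
  have hden2 : (0:ℝ) < 2 + 2*s + 2*c := by linarith
  have hFeq : Ff2 u = (4*c*(1+s)*(2+2*s+2*c)^2 + (π+2*u)*(-s*(1+s)-c*c)*(2+2*s+2*c)^2
      - 4*(2*c-2*s)*(1+s)^2*(2+2*s+2*c)
      - 2*u*((2*(-s)+2*(-c))*(2+2*s+2*c) - (2*c-2*s)*(2*c-2*s))*(1+s)^2)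
      / ((1+s)^2*(2+2*s+2*c)^2) := by
    simp only [Ff2, ← hs_def, ← hc_def]
    field_simp
    ring
  rw [hFeq]
  apply div_neg_of_neg_of_pos _ (by positivity)
  have hNP : 4*c*(1+s)*(2+2*s+2*c)^2 + (π+2*u)*(-s*(1+s)-c*c)*(2+2*s+2*c)^2
      - 4*(2*c-2*s)*(1+s)^2*(2+2*s+2*c)
      - 2*u*((2*(-s)+2*(-c))*(2+2*s+2*c) - (2*c-2*s)*(2*c-2*s))*(1+s)^2
      = 4*(1+s)*((4*c - π - 2*u)*(1+s+c)^2 - 4*(c-s)*(1+s)*(1+s+c) + 2*u*(2+s+c)*(1+s)) := by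
    linear_combination (-4*π - 8*c*π - 4*c^2*π - 8*s*π - 8*s*c*π - 4*s^2*π
      + 8*u - 16*u*c - 8*u*c^2 + 16*u*s - 16*u*s*c + 8*u*s^2) * hsc
  rw [hNP]
  have hP := Pfull_neg u s c hu0 hu786 h1 h2 hs_pos.le h3 h4 hsc
  have h1s : (0:ℝ) < 4*(1+s) := by linarith
  exact mul_neg_of_pos_of_neg h1s hP

lemma denoms_ne (y : ℝ) (hy : y ∈ Set.Icc 0 (π/4)) :
    (1:ℝ) + Real.sin y ≠ 0 ∧ (2:ℝ) + 2*Real.sin y + 2*Real.cos y ≠ 0 := by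
  have h3 := Real.pi_gt_three
  have hs : 0 ≤ Real.sin y := Real.sin_nonneg_of_nonneg_of_le_pi hy.1 (by linarith [hy.2])
  have hc : 0 ≤ Real.cos y := Real.cos_nonneg_of_mem_Icc ⟨by linarith [hy.1], by linarith [hy.2]⟩
  constructor <;> positivity

lemma Ff_contOn : ContinuousOn Ff (Set.Icc 0 (π/4)) := by
  apply ContinuousOn.sub
  · apply ContinuousOn.mul (by fun_prop)
    exact ContinuousOn.log (by fun_prop) (fun y hy => (denoms_ne y hy).1)
  · apply ContinuousOn.mul (by fun_prop)
    exact ContinuousOn.log (by fun_prop) (fun y hy => (denoms_ne y hy).2)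

lemma Ff_concave : StrictConcaveOn ℝ (Set.Icc 0 (π/4)) Ff := by
  apply strictConcaveOn_of_deriv2_neg (convex_Icc _ _) Ff_contOn
  intro x hx
  rw [interior_Icc] at hx
  have hEq : Set.EqOn (deriv Ff) Ff1 (Set.Ioo 0 (π/4)) := by
    intro y hy
    have h := denoms_ne y ⟨hy.1.le, hy.2.le⟩
    exact (hasDeriv1 y h.1 h.2).deriv
  have hx' := denoms_ne x ⟨hx.1.le, hx.2.le⟩
  have e1 : deriv (deriv Ff) x = deriv Ff1 x :=
    Filter.EventuallyEq.deriv_eq (Filter.eventuallyEq_of_mem (isOpen_Ioo.mem_nhds hx) hEq)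
  have e2 : deriv Ff1 x = Ff2 x := (hasDeriv2 x hx'.1 hx'.2).deriv
  have : deriv^[2] Ff x = Ff2 x := by
    rw [Function.iterate_succ, Function.iterate_one, Function.comp_apply, e1, e2]
  rw [this]
  exact Ff2_neg x hx

lemma Ff_zero : Ff 0 = 0 := by simp [Ff]

lemma Ff_quarter : 0 ≤ Ff (π/4) := by
  have hpi : 0 < π := Real.pi_pos
  have hs : Real.sin (π/4) = Real.sqrt 2 / 2 := Real.sin_pi_div_four
  have hc : Real.cos (π/4) = Real.sqrt 2 / 2 := Real.cos_pi_div_four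
  have hr2 : Real.sqrt 2 ^ 2 = 2 := Real.sq_sqrt (by norm_num)
  have hr0 : 0 ≤ Real.sqrt 2 := Real.sqrt_nonneg 2
  have hr2' : Real.sqrt 2 ≤ 2 := by nlinarith
  simp only [Ff, hs, hc]
  have e1 : (2:ℝ) + 2*(Real.sqrt 2/2) + 2*(Real.sqrt 2/2) = 2 + 2*Real.sqrt 2 := by ring
  rw [e1]
  have hb1 : (0:ℝ) < 1 + Real.sqrt 2/2 := by nlinarith
  have hb2 : (0:ℝ) < 2 + 2*Real.sqrt 2 := by nlinarith
  have hlog : Real.log (2 + 2*Real.sqrt 2) ≤ 3 * Real.log (1 + Real.sqrt 2/2) := by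
    have h3 : (3:ℝ) * Real.log (1 + Real.sqrt 2/2) = Real.log ((1 + Real.sqrt 2/2)^(3:ℕ)) := by
      rw [Real.log_pow]; norm_num
    rw [h3, Real.log_le_log_iff hb2 (by positivity)]
    nlinarith
  have hL1 : 0 ≤ Real.log (1 + Real.sqrt 2/2) := by
    apply Real.log_nonneg; nlinarith
  nlinarith [hlog, hL1, hpi]

lemma Ff_nonneg (u : ℝ) (hu : u ∈ Set.Icc 0 (π/4)) : 0 ≤ Ff u := by
  have hpi : 0 < π := Real.pi_pos
  have hq : (0:ℝ) < π/4 := by linarith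
  set t := u / (π/4) with ht_def
  have ht0 : 0 ≤ t := div_nonneg hu.1 hq.le
  have ht1 : t ≤ 1 := (div_le_one hq).2 hu.2
  have hcomb := Ff_concave.concaveOn.2 (Set.left_mem_Icc.2 hq.le) (Set.right_mem_Icc.2 hq.le)
      (by linarith : (0:ℝ) ≤ 1 - t) ht0 (by ring)
  have heq : (1-t) • (0:ℝ) + t • (π/4) = u := by
    simp only [smul_eq_mul, mul_zero, zero_add]
    rw [ht_def, div_mul_cancel₀ _ hq.ne']
  rw [heq] at hcomb
  have : (1-t) • Ff 0 + t • Ff (π/4) ≤ Ff u := hcomb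
  rw [Ff_zero] at this
  simp only [smul_eq_mul, mul_zero, zero_add] at this
  nlinarith [Ff_quarter, ht0, this]

theorem ineq_five (p : ℝ) (hp1 : 4/3 ≤ p) (hp2 : p ≤ 2) :
    (1 + Real.cot (π / (2 * p))) ^ (1 - p / 2) ≤
      (2 : ℝ) ^ (p - 1) * Real.sin (π / (2 * p)) ^ p := by
  have hπ : 0 < π := Real.pi_pos
  have hp0 : 0 < p := by linarith
  set θ := π / (2 * p) with hθ_def
  have hθ0 : 0 < θ := by positivity
  have hθhalf : θ < π/2 := by
    rw [hθ_def, div_lt_div_iff₀ (by positivity) (by norm_num)]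
    nlinarith
  have hs : 0 < Real.sin θ := Real.sin_pos_of_pos_of_lt_pi hθ0 (by linarith)
  have hc : 0 < Real.cos θ := Real.cos_pos_of_mem_Ioo ⟨by linarith, hθhalf⟩
  set s := Real.sin θ with hs_def
  set c := Real.cos θ with hc_def
  set u := π/p - π/2 with hu_def
  have hu : u ∈ Set.Icc 0 (π/4) := by
    constructor
    · rw [hu_def, sub_nonneg, div_le_div_iff₀ (by norm_num) hp0]
      nlinarith
    · rw [hu_def, sub_le_iff_le_add]
      rw [div_le_iff₀ hp0]
      nlinarith
  have hFf := Ff_nonneg u hu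
  simp only [Ff] at hFf
  have hu2θ : u = 2*θ - π/2 := by
    rw [hu_def, hθ_def]
    field_simp
  have hsinu : Real.sin u = 2*s^2 - 1 := by
    rw [hu2θ, Real.sin_sub_pi_div_two, Real.cos_two_mul']
    have := Real.sin_sq_add_cos_sq θ
    rw [← hs_def, ← hc_def] at this ⊢
    linarith
  have hcosu : Real.cos u = 2*s*c := by
    rw [hu2θ, Real.cos_sub_pi_div_two, Real.sin_two_mul, ← hs_def, ← hc_def]
  have e1 : 1 + Real.sin u = 2*s^2 := by rw [hsinu]; ring
  have e2 : 2 + 2*Real.sin u + 2*Real.cos u = 4*s*(s+c) := by rw [hsinu, hcosu]; ring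
  have c1 : π + 2*u = 2*(π/p) := by rw [hu_def]; ring
  have c2 : 2*u = 2*(π/p) - π := by rw [hu_def]; ring
  rw [e1, e2, c1, c2] at hFf
  -- log expansions
  have hsc0 : 0 < s + c := by linarith
  have hlog1 : Real.log (2*s^2) = Real.log 2 + 2*Real.log s := by
    rw [Real.log_mul (by norm_num) (by positivity), Real.log_pow]
    push_cast; ring
  have hlog2 : Real.log (4*s*(s+c)) = 2*Real.log 2 + Real.log s + Real.log (s+c) := by
    rw [Real.log_mul (by positivity) (ne_of_gt hsc0), Real.log_mul (by norm_num) (ne_of_gt hs),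
      show (4:ℝ) = 2^(2:ℕ) by norm_num, Real.log_pow]
    push_cast; ring
  rw [hlog1, hlog2] at hFf
  have hk : (0:ℝ) < 2*(π/p) := by positivity
  have hfac : 2*(π/p) - π = (2*(π/p))*(1-p/2) := by field_simp
  have h' : (1-p/2)*(2*Real.log 2 + Real.log s + Real.log (s+c)) ≤ Real.log 2 + 2*Real.log s := by
    rw [hfac] at hFf
    apply le_of_mul_le_mul_left _ hk
    nlinarith [hFf]
  -- transform goal
  have hcot : 1 + Real.cot θ = (s+c)/s := by
    rw [Real.cot_eq_cos_div_sin, ← hs_def, ← hc_def]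
    field_simp
  rw [hcot]
  have hbase : (0:ℝ) < (s+c)/s := by positivity
  have hposL : (0:ℝ) < ((s+c)/s)^(1-p/2) := Real.rpow_pos_of_pos hbase _
  have hposR : (0:ℝ) < (2:ℝ)^(p-1) * s^p := by positivity
  rw [← Real.log_le_log_iff hposL hposR, Real.log_rpow hbase,
    Real.log_mul (ne_of_gt (Real.rpow_pos_of_pos two_pos _)) (ne_of_gt (Real.rpow_pos_of_pos hs _)),
    Real.log_rpow two_pos, Real.log_rpow hs, Real.log_div (ne_of_gt hsc0) (ne_of_gt hs)]
  nlinarith [h']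
end

section
/- For all real p with 1 < p ≤ 4/3, 1 − 4 / (4^p · sin^(2p)(π/(2p))) ≥ cot²(π/(2p)). -/
open Real

-- exp(-t) ≤ 1 - t + t²/2 for t ≥ 0
lemma exp_neg_le_quad {t : ℝ} (ht : 0 ≤ t) : Real.exp (-t) ≤ 1 - t + t^2/2 := by
  have h1 : 1 + t + t^2/2 ≤ Real.exp t := Real.quadratic_le_exp_of_nonneg ht
  have h2 : Real.exp (-t) * Real.exp t = 1 := by
    rw [← Real.exp_add]; simp
  have h3 : 0 < Real.exp (-t) := Real.exp_pos _
  nlinarith [sq_nonneg (t^2), sq_nonneg t, mul_pos h3 (Real.exp_pos t)]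

-- cos x ≥ exp(-0.6 x²) on [0, π/4]
lemma cos_ge_exp {x : ℝ} (h0 : 0 ≤ x) (h1 : x ≤ π/4) :
    Real.exp (-(0.6 * x^2)) ≤ Real.cos x := by
  set y := x/2 with hy
  have hy0 : 0 ≤ y := by positivity
  have hyb : y ≤ 0.394 := by
    have := Real.pi_lt_d2
    simp only [hy]; nlinarith
  have hyabs : |y| ≤ 1 := by rw [abs_of_nonneg hy0]; linarith
  have hsb := Real.sin_bound hyabs
  rw [abs_of_nonneg hy0] at hsb
  have hsin_le : Real.sin y ≤ y - y^3/6 + y^4 * (5/96) := by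
    have := abs_le.1 hsb; nlinarith [this.2, mul_nonneg (sub_nonneg.2 hyb) (pow_nonneg hy0 4)]
  have hsin0 : 0 ≤ Real.sin y := by
    apply Real.sin_nonneg_of_nonneg_of_le_pi hy0
    nlinarith [Real.pi_gt_three]
  have hcos : Real.cos x = 1 - 2 * Real.sin y ^ 2 := by
    have := Real.sin_sq_eq_half_sub (x := y)
    have h2y : 2 * y = x := by rw [hy]; ring
    rw [h2y] at this; linarith
  have hsq : Real.sin y ^ 2 ≤ (y - y^3/6 + y^4 * (5/96))^2 := by
    have hQ0 : 0 ≤ y - y^3/6 + y^4 * (5/96) := le_trans hsin0 hsin_le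
    nlinarith [hsin_le, hsin0]
  have hpoly : 2 * (y - y^3/6 + y^4 * (5/96))^2 ≤ 2.4 * y^2 - 2.88 * y^4 := by
    nlinarith [sq_nonneg y, sq_nonneg (y^2), sq_nonneg (y^3), mul_nonneg hy0 (sq_nonneg y),
      mul_nonneg (mul_nonneg hy0 hy0) (sq_nonneg y),
      mul_nonneg (sub_nonneg.2 hyb) (sq_nonneg y),
      mul_nonneg (mul_nonneg (sub_nonneg.2 hyb) hy0) (sq_nonneg y),
      mul_nonneg (mul_nonneg (sub_nonneg.2 hyb) (sub_nonneg.2 hyb)) (sq_nonneg y),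
      mul_nonneg (mul_nonneg (mul_nonneg (sub_nonneg.2 hyb) hy0) hy0) (sq_nonneg y)]
  have hexp : Real.exp (-(0.6 * x^2)) ≤ 1 - 0.6*x^2 + (0.6*x^2)^2/2 :=
    exp_neg_le_quad (by positivity)
  have hx2y : x = 2*y := by rw [hy]; ring
  rw [hcos]
  have : 2 * Real.sin y ^2 ≤ 0.6*x^2 - 0.18*x^4 := by
    rw [hx2y]; nlinarith [hsq, hpoly]
  nlinarith [hexp]

lemma log_cos_ge {x : ℝ} (h0 : 0 ≤ x) (h1 : x ≤ π/4) :
    -(0.6 * x^2) ≤ Real.log (Real.cos x) := by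
  have hc : 0 < Real.cos x := by
    apply Real.cos_pos_of_mem_Ioo
    constructor <;> nlinarith [Real.pi_pos]
  rw [Real.le_log_iff_exp_le hc]
  exact cos_ge_exp h0 h1

lemma key_log {u : ℝ} (hu0 : 0 < u) (hu8 : u ≤ π/8) :
    0 ≤ Real.log (Real.cos (2*u)) + (2*u/(π - 2*u)) * Real.log (4 * Real.cos u ^ 2) := by
  have hpi := Real.pi_lt_d2
  have hpi3 := Real.pi_gt_three
  have hden : 0 < π - 2*u := by nlinarith
  have hcu : 0 < Real.cos u := by
    apply Real.cos_pos_of_mem_Ioo; constructor <;> nlinarith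
  -- log (4 cos²u) = log 4 + 2 log cos u
  have hL : Real.log (4 * Real.cos u ^ 2) = Real.log 4 + 2 * Real.log (Real.cos u) := by
    rw [Real.log_mul (by norm_num) (by positivity), Real.log_pow]
    push_cast; ring
  have hlogcosu : -(0.6 * u^2) ≤ Real.log (Real.cos u) := log_cos_ge hu0.le (by linarith)
  have hlogcos2u : -(0.6 * (2*u)^2) ≤ Real.log (Real.cos (2*u)) :=
    log_cos_ge (by linarith) (by linarith)
  have hlog4 : Real.log 4 = 2 * Real.log 2 := by
    rw [show (4:ℝ) = 2^2 by norm_num, Real.log_pow]; push_cast; ring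
  have hlog2 := Real.log_two_gt_d9
  -- log 4 ≥ 1.2 π u - 1.2 u²
  have hquad : 1.2 * π * u - 1.2 * u^2 ≤ Real.log 4 := by
    rw [hlog4]
    nlinarith [mul_nonneg (sub_nonneg.2 hu8) (by nlinarith : (0:ℝ) ≤ 7*π/8 - u)]
  have hLlb : Real.log 4 - 1.2 * u^2 ≤ Real.log (4 * Real.cos u ^ 2) := by
    rw [hL]; linarith
  have hLpos : 0 ≤ Real.log 4 - 1.2 * u^2 := by
    rw [hlog4]; nlinarith
  have hr0 : 0 ≤ 2*u/(π - 2*u) := by positivity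
  have step : 2.4 * u^2 ≤ (2*u/(π - 2*u)) * (Real.log 4 - 1.2*u^2) := by
    rw [div_mul_eq_mul_div, le_div_iff₀ hden]
    nlinarith
  have step2 : (2*u/(π - 2*u)) * (Real.log 4 - 1.2*u^2) ≤
      (2*u/(π - 2*u)) * Real.log (4 * Real.cos u ^ 2) :=
    mul_le_mul_of_nonneg_left hLlb hr0
  nlinarith [hlogcos2u]

theorem ineq_six (p : ℝ) (hp1 : 1 < p) (hp2 : p ≤ 4/3) :
    1 - 4 / ((4 : ℝ) ^ p * Real.sin (π / (2 * p)) ^ (2 * p)) ≥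
      Real.cot (π / (2 * p)) ^ 2 := by
  have hpi := Real.pi_lt_d2
  have hpi3 := Real.pi_gt_three
  have hp0 : 0 < p := by linarith
  obtain ⟨u, huval, hθ⟩ : ∃ u : ℝ, u = π * (p-1)/(2*p) ∧ π/(2*p) = π/2 - u :=
    ⟨π/2 - π/(2*p), by field_simp, by ring⟩
  have hu0 : 0 < u := by
    rw [huval]
    apply div_pos (by nlinarith) (by linarith)
  have hu8 : u ≤ π/8 := by
    rw [huval, div_le_iff₀ (by linarith : (0:ℝ) < 2*p)]
    nlinarith
  have hden : 0 < π - 2*u := by nlinarith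
  have hcu : 0 < Real.cos u := by
    apply Real.cos_pos_of_mem_Ioo; constructor <;> nlinarith
  have hc2u : 0 < Real.cos (2*u) := by
    apply Real.cos_pos_of_mem_Ioo; constructor <;> nlinarith
  have hpm1 : p - 1 = 2*u/(π - 2*u) := by
    rw [eq_div_iff (by linarith : π - 2*u ≠ 0)]
    rw [huval]; field_simp; ring
  -- rewrite sin and cot
  rw [hθ, Real.cot_eq_cos_div_sin, Real.sin_pi_div_two_sub, Real.cos_pi_div_two_sub]
  have hbase : (0:ℝ) < 4 * Real.cos u ^ 2 := by positivity
  have hXeq : (4 : ℝ) ^ p * Real.cos u ^ (2 * p) = (4 * Real.cos u ^ 2) ^ p := by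
    rw [Real.mul_rpow (by norm_num) (by positivity)]
    congr 1
    rw [show (2 * p : ℝ) = (2:ℝ) * p from rfl, Real.rpow_mul hcu.le]
    norm_num [Real.rpow_two]
  rw [hXeq]
  have hXpos : 0 < (4 * Real.cos u ^ 2) ^ p := Real.rpow_pos_of_pos hbase p
  have hsplit : (4 * Real.cos u ^ 2) ^ p
      = (4 * Real.cos u ^ 2) ^ (p - 1) * (4 * Real.cos u ^ 2) := by
    have h1 : (4 * Real.cos u ^ 2) ^ (p-1) * (4 * Real.cos u ^ 2) ^ (1:ℝ)
        = (4 * Real.cos u ^ 2) ^ p := by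
      rw [← Real.rpow_add hbase]; norm_num
    rw [← h1, Real.rpow_one]
  have hfac : 1 ≤ Real.cos (2*u) * (4 * Real.cos u ^ 2) ^ (p - 1) := by
    rw [Real.rpow_def_of_pos hbase, ← Real.exp_log hc2u, ← Real.exp_add]
    apply Real.one_le_exp
    have := key_log hu0 hu8
    rw [hpm1]
    linarith [this]
  have htan : (Real.sin u / Real.cos u)^2 = 1 - Real.cos (2*u) / Real.cos u ^ 2 := by
    rw [Real.cos_two_mul', div_pow]
    field_simp
    ring
  have h4 : 4 / (4 * Real.cos u ^ 2) ^ p ≤ Real.cos (2*u) / Real.cos u ^ 2 := by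
    rw [div_le_div_iff₀ hXpos (by positivity), hsplit]
    nlinarith [hfac, hbase]
  rw [ge_iff_le, htan]
  linarith
end

section
/- For all x ∈ [0, 1/3], log((1−x²)/4) − (1 + (2/π)x)·log((1+x²)/4) ≥ 0. -/
open Real

theorem g1_nonneg (x : ℝ) (hx : x ∈ Set.Icc (0 : ℝ) (1/3 : ℝ)) :
    0 ≤ Real.log ((1 - x ^ 2) / 4) - (1 + (2 / π) * x) * Real.log ((1 + x ^ 2) / 4) := by
  obtain ⟨hx0, hx1⟩ := hx
  have hπ := Real.pi_gt_d6
  have hπ' := Real.pi_lt_d6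
  have hπpos := Real.pi_pos
  have hx2 : x ^ 2 ≤ 1/9 := by nlinarith
  have hne : (1 : ℝ) - x ^ 2 ≠ 0 := by nlinarith
  have ha : (0:ℝ) < (1 - x ^ 2)/4 := by nlinarith
  have hb : (0:ℝ) < (1 + x ^ 2)/4 := by nlinarith
  -- log b - log a ≤ (9/4) x^2
  have h1 : Real.log ((1 + x ^ 2)/4) - Real.log ((1 - x ^ 2)/4) ≤ (9/4) * x ^ 2 := by
    rw [← Real.log_div hb.ne' ha.ne']
    have heq : ((1 + x ^ 2)/4) / ((1 - x ^ 2)/4) = (1 + x ^ 2)/(1 - x ^ 2) := by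
      field_simp
    have h := Real.log_le_sub_one_of_pos (div_pos hb ha)
    rw [heq] at h ⊢
    have h2 : (1 + x ^ 2)/(1 - x ^ 2) - 1 ≤ (9/4) * x ^ 2 := by
      rw [div_sub_one hne, div_le_iff₀ (by nlinarith : (0:ℝ) < 1 - x ^ 2)]
      nlinarith [mul_nonneg (sq_nonneg x) (by linarith : (0:ℝ) ≤ 1/9 - x ^ 2)]
    linarith
  -- log(18/5) ≥ 1.18
  have hlog : (1.18:ℝ) ≤ Real.log (18/5) := by
    have hmono : Real.exp (1.18 : ℝ) ≤ 18/5 := by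
      have h1 : Real.exp (1.18 : ℝ) = Real.exp 1 * Real.exp 0.18 := by
        rw [← Real.exp_add]; norm_num
      have h2 : Real.exp (0.18:ℝ) ≤ 1/0.82 := by
        have h := Real.add_one_le_exp (-0.18 : ℝ)
        rw [Real.exp_neg] at h
        have hpos := Real.exp_pos (0.18:ℝ)
        have h' := mul_le_mul_of_nonneg_right h hpos.le
        rw [inv_mul_cancel₀ hpos.ne'] at h'
        nlinarith
      have h3 := Real.exp_one_lt_d9
      nlinarith [Real.exp_pos (0.18:ℝ), Real.exp_pos (1:ℝ)]
    calc (1.18:ℝ) = Real.log (Real.exp 1.18) := (Real.log_exp _).symm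
      _ ≤ Real.log (18/5) := Real.log_le_log (Real.exp_pos _) hmono
  -- log b ≤ -1.18
  have hB : Real.log ((1 + x ^ 2)/4) ≤ -1.18 := by
    have hle : (1 + x ^ 2)/4 ≤ 5/18 := by nlinarith
    have := Real.log_le_log hb hle
    rw [show (5/18:ℝ) = (18/5:ℝ)⁻¹ by norm_num, Real.log_inv] at this
    linarith
  set u : ℝ := (2 / π) * x with hu_def
  have hu : 0 ≤ u := by positivity
  have hkey : (9/4) * x ^ 2 ≤ u * 1.18 := by
    rcases eq_or_lt_of_le hx0 with h | h
    · simp [hu_def, ← h]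
    · rw [hu_def, mul_comm ((2:ℝ)/π) x, ← mul_div_assoc,
        div_mul_eq_mul_div (x*2) π 1.18, le_div_iff₀ hπpos]
      have hxx : x ^ 2 ≤ x / 3 := by nlinarith
      nlinarith [mul_le_mul_of_nonneg_right hπ'.le (sq_nonneg x),
        mul_le_mul_of_nonneg_right hxx hπpos.le]
  nlinarith [mul_le_mul_of_nonneg_left hB hu]
end

section
/- For p ≥ 9 and all r ∈ [0, 1], (1+r)^p / (2^p · cos^p(π/(2p))) − ((1 + r^(p/(p−1)))/2)^(p−1) − r^(p/2) · tan(π/(2p)) ≤ 0. -/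
open Real

lemma my_sum8 (t : ℝ) : ∑ i ∈ Finset.range 8, t^i / (Nat.factorial i) =
    1 + t + t^2/2 + t^3/6 + t^4/24 + t^5/120 + t^6/720 + t^7/5040 := by
  norm_num [Finset.sum_range_succ, Nat.factorial]

-- cosh upper bound
lemma my_cosh_ub {t : ℝ} (h0 : 0 ≤ t) (h1 : t ≤ 1) :
    exp t + exp (-t) ≤ 2 * (1 + t^2/2 + t^4/24 + t^6/720 + t^8/35840) := by
  have ha : |t| ≤ 1 := by rw [abs_of_nonneg h0]; exact h1
  have hb : |(-t)| ≤ 1 := by rwa [abs_neg]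
  have e1 := Real.exp_bound ha (n := 8) (by norm_num)
  have e2 := Real.exp_bound hb (n := 8) (by norm_num)
  rw [my_sum8] at e1
  rw [my_sum8] at e2
  rw [abs_of_nonneg h0] at e1
  rw [abs_neg, abs_of_nonneg h0] at e2
  have h1' := (abs_le.1 e1).2
  have h2' := (abs_le.1 e2).2
  have hfac : ((Nat.factorial 8 : ℕ) : ℝ) = 40320 := by norm_num [Nat.factorial]
  rw [hfac] at h1' h2'
  norm_num at h1' h2'
  nlinarith [h1', h2']

-- sinh lower bound
lemma my_sinh_lb {t : ℝ} (h0 : 0 ≤ t) (h1 : t ≤ 1) :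
    2 * (t + t^3/6 + t^5/120) ≤ exp t - exp (-t) := by
  have hb : |(-t)| ≤ 1 := by rw [abs_neg, abs_of_nonneg h0]; exact h1
  have e2 := Real.exp_bound hb (n := 8) (by norm_num)
  rw [my_sum8] at e2
  rw [abs_neg, abs_of_nonneg h0] at e2
  have h2' := (abs_le.1 e2).2
  have hfac : ((Nat.factorial 8 : ℕ) : ℝ) = 40320 := by norm_num [Nat.factorial]
  rw [hfac] at h2'
  norm_num at h2'
  have e1 := Real.sum_le_exp_of_nonneg h0 8
  rw [my_sum8] at e1
  nlinarith [e1, h2', pow_le_one₀ h0 h1 (n := 8), pow_nonneg h0 7, pow_nonneg h0 8]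

lemma my_P1 (w : ℝ) (h0 : 0 ≤ w) (h1 : w ≤ 0.64) :
    1 + w/2 + w^2/24 + w^3/720 + w^4/35840
      ≤ 1 + (w/2 - w^2/12 + w^3/45) + (w/2 - w^2/12 + w^3/45)^2/2 + (w/2 - w^2/12 + w^3/45)^3/6 := by
  have hv : 0 ≤ 0.64 - w := by linarith
  nlinarith [mul_nonneg h0 hv, mul_nonneg (mul_nonneg h0 h0) hv,
    mul_nonneg (mul_nonneg (mul_nonneg h0 h0) h0) hv,
    mul_nonneg (mul_nonneg (mul_nonneg (mul_nonneg h0 h0) h0) h0) hv,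
    mul_nonneg (mul_nonneg (mul_nonneg (mul_nonneg (mul_nonneg h0 h0) h0) h0) h0) hv,
    mul_nonneg (mul_nonneg (mul_nonneg (mul_nonneg (mul_nonneg (mul_nonneg h0 h0) h0) h0) h0) h0) hv,
    mul_nonneg (mul_nonneg (mul_nonneg (mul_nonneg (mul_nonneg (mul_nonneg (mul_nonneg h0 h0) h0) h0) h0) h0) h0) hv,
    mul_nonneg (mul_nonneg (mul_nonneg (mul_nonneg (mul_nonneg (mul_nonneg (mul_nonneg (mul_nonneg h0 h0) h0) h0) h0) h0) h0) h0) hv,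
    mul_nonneg (mul_nonneg (mul_nonneg h0 h0) h0) (mul_nonneg h0 h0)]

lemma my_P2 (w : ℝ) (h0 : 0 ≤ w) (h1 : w ≤ 0.3364) :
    (1 + w/2 + w^2/24 + w^3/720 + w^4/35840) * (w/2 - w^2/12 + w^3/45)
      ≤ (28/53) * (w + w^2/6 + w^3/120) := by
  have hv : 0 ≤ 0.3364 - w := by linarith
  nlinarith [mul_nonneg h0 hv, mul_nonneg (mul_nonneg h0 h0) hv,
    mul_nonneg (mul_nonneg (mul_nonneg h0 h0) h0) hv,
    mul_nonneg (mul_nonneg (mul_nonneg (mul_nonneg h0 h0) h0) h0) hv,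
    mul_nonneg (mul_nonneg (mul_nonneg (mul_nonneg (mul_nonneg h0 h0) h0) h0) h0) hv,
    mul_nonneg (mul_nonneg (mul_nonneg (mul_nonneg (mul_nonneg (mul_nonneg h0 h0) h0) h0) h0) h0) hv,
    mul_nonneg h0 h0, mul_nonneg (mul_nonneg h0 h0) h0]

lemma my_P3 (w : ℝ) (h0 : 0.3364 ≤ w) (h1 : w ≤ 0.64) :
    (1 + w/2 + w^2/24 + w^3/720 + w^4/35840) * (w/2 - w^2/12 + w^3/45 + 0.1393)
      ≤ (w + w^2/6 + w^3/120) := by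
  have hu : 0 ≤ w - 0.3364 := by linarith
  have hv : 0 ≤ 0.64 - w := by linarith
  nlinarith [mul_nonneg hu hv, mul_nonneg (mul_nonneg hu hu) hv,
    mul_nonneg (mul_nonneg (mul_nonneg hu hu) hu) hv,
    mul_nonneg (mul_nonneg (mul_nonneg (mul_nonneg hu hu) hu) hu) hv,
    mul_nonneg (mul_nonneg (mul_nonneg (mul_nonneg (mul_nonneg hu hu) hu) hu) hu) hv,
    mul_nonneg (mul_nonneg (mul_nonneg (mul_nonneg (mul_nonneg (mul_nonneg hu hu) hu) hu) hu) hu) hv,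
    mul_nonneg hu hu, mul_nonneg (mul_nonneg hu hu) hu]

-- beta ≤ (28/25) g, in exp form.
set_option maxHeartbeats 1000000 in
lemma my_beta_le (t : ℝ) (h0 : 0 ≤ t) (h1 : t ≤ 0.58) :
    25 * log ((exp t + exp (-t))/2)
      ≤ 28 * (t * ((exp t - exp (-t))/(exp t + exp (-t))) - log ((exp t + exp (-t))/2)) := by
  have hw1 : t^2 ≤ 0.3364 := by nlinarith
  have hch : (0:ℝ) < (exp t + exp (-t))/2 := by positivity
  have hCU : (exp t + exp (-t))/2 ≤ 1 + t^2/2 + t^4/24 + t^6/720 + t^8/35840 := by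
    linarith [my_cosh_ub h0 (by linarith : t ≤ 1)]
  have hCUpos : (0:ℝ) < 1 + t^2/2 + t^4/24 + t^6/720 + t^8/35840 := by positivity
  have hSL : t + t^3/6 + t^5/120 ≤ (exp t - exp (-t))/2 := by
    linarith [my_sinh_lb h0 (by linarith : t ≤ 1)]
  have hSLpos : (0:ℝ) ≤ t + t^3/6 + t^5/120 := by positivity
  have hsh0 : (0:ℝ) ≤ (exp t - exp (-t))/2 := le_trans hSLpos hSL
  have hG0 : (0:ℝ) ≤ t^2/2 - t^4/12 + t^6/45 := by nlinarith [sq_nonneg t, pow_nonneg h0 6]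
  -- log cosh ≤ G
  have hlog : log ((exp t + exp (-t))/2) ≤ t^2/2 - t^4/12 + t^6/45 := by
    have key := my_P1 (t^2) (sq_nonneg t) (by linarith)
    have hP1 : (exp t + exp (-t))/2 ≤ 1 + (t^2/2 - t^4/12 + t^6/45) + (t^2/2 - t^4/12 + t^6/45)^2/2
        + (t^2/2 - t^4/12 + t^6/45)^3/6 := by
      refine le_trans hCU ?_
      ring_nf
      ring_nf at key
      linarith
    have hexp : 1 + (t^2/2 - t^4/12 + t^6/45) + (t^2/2 - t^4/12 + t^6/45)^2/2
        + (t^2/2 - t^4/12 + t^6/45)^3/6 ≤ exp (t^2/2 - t^4/12 + t^6/45) := by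
      have h := Real.sum_le_exp_of_nonneg hG0 4
      have hs : ∑ i ∈ Finset.range 4, (t^2/2 - t^4/12 + t^6/45)^i / (Nat.factorial i)
          = 1 + (t^2/2 - t^4/12 + t^6/45) + (t^2/2 - t^4/12 + t^6/45)^2/2
            + (t^2/2 - t^4/12 + t^6/45)^3/6 := by
        norm_num [Finset.sum_range_succ, Nat.factorial]
      rw [hs] at h; exact h
    calc log ((exp t + exp (-t))/2) ≤ log (exp (t^2/2 - t^4/12 + t^6/45)) :=
          Real.log_le_log hch (le_trans hP1 hexp)
      _ = t^2/2 - t^4/12 + t^6/45 := Real.log_exp _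
  -- G ≤ (28/53) t tanh t
  have hdiv : (t + t^3/6 + t^5/120)/(1 + t^2/2 + t^4/24 + t^6/720 + t^8/35840)
      ≤ ((exp t - exp (-t))/2) / ((exp t + exp (-t))/2) :=
    div_le_div₀ hsh0 hSL hch hCU
  have htanh0 : ((exp t - exp (-t))/2) / ((exp t + exp (-t))/2)
      = (exp t - exp (-t))/(exp t + exp (-t)) := by
    have h2 : (exp t + exp (-t)) ≠ 0 := by positivity
    field_simp
  have key2 := my_P2 (t^2) (sq_nonneg t) hw1
  have hP2 : (1 + t^2/2 + t^4/24 + t^6/720 + t^8/35840) * (t^2/2 - t^4/12 + t^6/45)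
      ≤ (28/53) * (t * (t + t^3/6 + t^5/120)) := by
    ring_nf
    ring_nf at key2
    linarith
  have h1 : t^2/2 - t^4/12 + t^6/45
      ≤ (28/53) * t * ((t + t^3/6 + t^5/120) / (1 + t^2/2 + t^4/24 + t^6/720 + t^8/35840)) := by
    rw [mul_div_assoc'] at *
    rw [le_div_iff₀ hCUpos]
    nlinarith [hP2]
  have h2 : (28/53) * t * ((t + t^3/6 + t^5/120) / (1 + t^2/2 + t^4/24 + t^6/720 + t^8/35840))
      ≤ (28/53) * t * ((exp t - exp (-t))/(exp t + exp (-t))) := by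
    rw [← htanh0]
    exact mul_le_mul_of_nonneg_left hdiv (by positivity)
  have hfin : log ((exp t + exp (-t))/2) ≤ (28/53) * t * ((exp t - exp (-t))/(exp t + exp (-t))) :=
    le_trans hlog (le_trans h1 h2)
  have hrw : t * ((exp t - exp (-t))/(exp t + exp (-t)))
      = (t * ((exp t - exp (-t))/(exp t + exp (-t)))) := rfl
  linarith [hfin]

set_option maxHeartbeats 1000000 in
lemma my_g_big (t : ℝ) (h1 : 0.58 ≤ t) :
    0.1393 ≤ t * ((exp t - exp (-t))/(exp t + exp (-t))) - log ((exp t + exp (-t))/2) := by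
  have h0 : (0:ℝ) ≤ t := by linarith
  rcases le_or_gt t 0.8 with hc | hc
  · -- polynomial regime
    have hw0 : (0.3364 : ℝ) ≤ t^2 := by nlinarith
    have hw1 : t^2 ≤ 0.64 := by nlinarith
    have hch : (0:ℝ) < (exp t + exp (-t))/2 := by positivity
    have hCU : (exp t + exp (-t))/2 ≤ 1 + t^2/2 + t^4/24 + t^6/720 + t^8/35840 := by
      linarith [my_cosh_ub h0 (by linarith : t ≤ 1)]
    have hCUpos : (0:ℝ) < 1 + t^2/2 + t^4/24 + t^6/720 + t^8/35840 := by positivity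
    have hSL : t + t^3/6 + t^5/120 ≤ (exp t - exp (-t))/2 := by
      linarith [my_sinh_lb h0 (by linarith : t ≤ 1)]
    have hSLpos : (0:ℝ) ≤ t + t^3/6 + t^5/120 := by positivity
    have hsh0 : (0:ℝ) ≤ (exp t - exp (-t))/2 := le_trans hSLpos hSL
    have hG0 : (0:ℝ) ≤ t^2/2 - t^4/12 + t^6/45 := by nlinarith [sq_nonneg t, pow_nonneg h0 6]
    -- log cosh ≤ G
    have hlog : log ((exp t + exp (-t))/2) ≤ t^2/2 - t^4/12 + t^6/45 := by
      have key := my_P1 (t^2) (sq_nonneg t) (by linarith)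
      have hP1 : (exp t + exp (-t))/2 ≤ 1 + (t^2/2 - t^4/12 + t^6/45) + (t^2/2 - t^4/12 + t^6/45)^2/2
          + (t^2/2 - t^4/12 + t^6/45)^3/6 := by
        refine le_trans hCU ?_
        ring_nf
        ring_nf at key
        linarith
      have hexp : 1 + (t^2/2 - t^4/12 + t^6/45) + (t^2/2 - t^4/12 + t^6/45)^2/2
          + (t^2/2 - t^4/12 + t^6/45)^3/6 ≤ exp (t^2/2 - t^4/12 + t^6/45) := by
        have h := Real.sum_le_exp_of_nonneg hG0 4
        have hs : ∑ i ∈ Finset.range 4, (t^2/2 - t^4/12 + t^6/45)^i / (Nat.factorial i)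
            = 1 + (t^2/2 - t^4/12 + t^6/45) + (t^2/2 - t^4/12 + t^6/45)^2/2
              + (t^2/2 - t^4/12 + t^6/45)^3/6 := by
          norm_num [Finset.sum_range_succ, Nat.factorial]
        rw [hs] at h; exact h
      calc log ((exp t + exp (-t))/2) ≤ log (exp (t^2/2 - t^4/12 + t^6/45)) :=
            Real.log_le_log hch (le_trans hP1 hexp)
        _ = t^2/2 - t^4/12 + t^6/45 := Real.log_exp _
    -- t tanh ≥ t SL/CU ≥ G + 0.1393
    have hdiv : (t + t^3/6 + t^5/120)/(1 + t^2/2 + t^4/24 + t^6/720 + t^8/35840)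
        ≤ ((exp t - exp (-t))/2) / ((exp t + exp (-t))/2) :=
      div_le_div₀ hsh0 hSL hch hCU
    have htanh0 : ((exp t - exp (-t))/2) / ((exp t + exp (-t))/2)
        = (exp t - exp (-t))/(exp t + exp (-t)) := by
      have h2 : (exp t + exp (-t)) ≠ 0 := by positivity
      field_simp
    have key3 := my_P3 (t^2) hw0 hw1
    have hP3 : (1 + t^2/2 + t^4/24 + t^6/720 + t^8/35840) * ((t^2/2 - t^4/12 + t^6/45) + 0.1393)
        ≤ t * (t + t^3/6 + t^5/120) := by
      ring_nf
      ring_nf at key3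
      linarith
    have h1' : (t^2/2 - t^4/12 + t^6/45) + 0.1393
        ≤ t * ((t + t^3/6 + t^5/120) / (1 + t^2/2 + t^4/24 + t^6/720 + t^8/35840)) := by
      rw [mul_div_assoc'] at *
      rw [le_div_iff₀ hCUpos]
      nlinarith [hP3]
    have h2' : t * ((t + t^3/6 + t^5/120) / (1 + t^2/2 + t^4/24 + t^6/720 + t^8/35840))
        ≤ t * ((exp t - exp (-t))/(exp t + exp (-t))) := by
      rw [← htanh0]
      exact mul_le_mul_of_nonneg_left hdiv h0
    linarith
  · -- large t regime
    set u := exp (-(2*t)) with hu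
    have hupos : 0 < u := exp_pos _
    have hid : t * ((exp t - exp (-t))/(exp t + exp (-t))) - log ((exp t + exp (-t))/2)
        = log 2 - 2*t*u/(1+u) - log (1+u) := by
      have he : exp (-t) = exp t * u := by
        rw [hu, ← exp_add]; congr 1; ring
      have hept : (0:ℝ) < exp t := exp_pos t
      have h1u : (0:ℝ) < 1 + u := by linarith
      have hth : (exp t - exp (-t))/(exp t + exp (-t)) = (1-u)/(1+u) := by
        rw [he]
        rw [show exp t - exp t * u = exp t * (1-u) by ring, show exp t + exp t * u = exp t * (1+u) by ring]
        rw [mul_div_mul_left _ _ (ne_of_gt hept)]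
      have hbeta : log ((exp t + exp (-t))/2) = t + log (1+u) - log 2 := by
        rw [he, show exp t + exp t * u = exp t * (1+u) by ring]
        rw [log_div (by positivity) (by norm_num), log_mul (ne_of_gt hept) (ne_of_gt h1u), log_exp]
      rw [hth, hbeta]
      field_simp
      ring
    rw [hid]
    -- bounds
    have hlog2 : (0.6931471803 : ℝ) < log 2 := Real.log_two_gt_d9
    have hexp16 : exp (-(1.6:ℝ)) ≤ 0.2025 := by
      have h : (4.9389 : ℝ) ≤ exp 1.6 := by
        have := Real.sum_le_exp_of_nonneg (by norm_num : (0:ℝ) ≤ 1.6) 7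
        have hs : ∑ i ∈ Finset.range 7, (1.6:ℝ)^i / (Nat.factorial i) =
            1 + 1.6 + 1.6^2/2 + 1.6^3/6 + 1.6^4/24 + 1.6^5/120 + 1.6^6/720 := by
          norm_num [Finset.sum_range_succ, Nat.factorial]
        rw [hs] at this
        norm_num at this ⊢
        linarith
      rw [exp_neg]
      rw [show (0.2025:ℝ) = (1/4.9389 : ℝ)*(4.9389*0.2025) by norm_num]
      calc (exp 1.6)⁻¹ ≤ (4.9389:ℝ)⁻¹ := by
            apply inv_anti₀ (by norm_num) h
        _ ≤ 1/4.9389*(4.9389*0.2025) := by norm_num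
    have hu16 : u ≤ 0.2025 := by
      rw [hu]
      calc exp (-(2*t)) ≤ exp (-(1.6:ℝ)) := exp_le_exp.2 (by linarith)
        _ ≤ 0.2025 := hexp16
    have h2tu : 2*t*u ≤ 0.324 := by
      have hv : (0:ℝ) ≤ 2*t - 1.6 := by linarith
      have hev : exp (-(2*t)) = exp (-(1.6:ℝ)) * exp (-(2*t-1.6)) := by
        rw [← exp_add]; congr 1; ring
      have hev2 : exp (-(2*t-1.6)) ≤ 1/(1+(2*t-1.6)) := by
        rw [exp_neg]
        rw [one_div]
        apply inv_anti₀ (by linarith)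
        linarith [Real.add_one_le_exp (2*t-1.6)]
      have : 2*t*u ≤ exp (-(1.6:ℝ)) * ((2*t)/(1+(2*t-1.6))) := by
        rw [hu, hev]
        rw [show exp (-(1.6:ℝ)) * exp (-(2*t-1.6)) = exp (-(2*t-1.6)) * exp (-(1.6:ℝ)) by ring]
        rw [show (2*t) * (exp (-(2*t-1.6)) * exp (-(1.6:ℝ))) = exp (-(1.6:ℝ)) * ((2*t) * exp (-(2*t-1.6))) by ring]
        apply mul_le_mul_of_nonneg_left _ (exp_pos _).le
        rw [div_eq_mul_inv, ← one_div]
        exact mul_le_mul_of_nonneg_left hev2 (by linarith)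
      have hfrac : (2*t)/(1+(2*t-1.6)) ≤ 1.6 := by
        rw [div_le_iff₀ (by linarith)]
        nlinarith
      calc 2*t*u ≤ exp (-(1.6:ℝ)) * ((2*t)/(1+(2*t-1.6))) := this
        _ ≤ 0.2025 * 1.6 := by
            apply mul_le_mul hexp16 hfrac (by positivity) (by norm_num)
        _ ≤ 0.324 := by norm_num
    have hloguu : log (1+u) ≤ u := by
      have := Real.log_le_sub_one_of_pos (show (0:ℝ) < 1+u by linarith)
      linarith
    have hdivu : 2*t*u/(1+u) ≤ 2*t*u := by
      apply div_le_self (by positivity) (by linarith)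
    linarith

lemma my_holder {r d : ℝ} (hr0 : 0 < r) (hd : 0 ≤ d) :
    1 + r ≤ (1 + r * exp (-d)) * exp (d * r / (1+r)) := by
  have h1r : (0:ℝ) < 1 + r := by linarith
  have h2 : exp (-d) * exp (d*r/(1+r)) = exp (-(d/(1+r))) := by
    rw [← exp_add]; congr 1; field_simp; ring
  have key : (1 + r * exp (-d)) * exp (d * r / (1+r))
      = exp (d * r/(1+r)) + r * exp (-(d/(1+r))) := by
    calc (1 + r * exp (-d)) * exp (d * r / (1+r))
        = exp (d*r/(1+r)) + r * (exp (-d) * exp (d*r/(1+r))) := by ring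
      _ = exp (d*r/(1+r)) + r * exp (-(d/(1+r))) := by rw [h2]
  rw [key]
  have e1 := Real.add_one_le_exp (d * r/(1+r))
  have e2 := Real.add_one_le_exp (-(d/(1+r)))
  have e2' : r * (-(d/(1+r)) + 1) ≤ r * exp (-(d/(1+r))) :=
    mul_le_mul_of_nonneg_left e2 hr0.le
  have hid : d*r/(1+r) + r * (-(d/(1+r)) + 1) = r := by field_simp; ring
  linarith

lemma my_exp_cubic {a : ℝ} (h0 : 0 ≤ a) (h1 : a ≤ 0.1392) : exp a ≤ 1 + 1.074 * a := by
  have ha : |a| ≤ 1 := by rw [abs_of_nonneg h0]; linarith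
  have e := Real.exp_bound ha (n := 3) (by norm_num)
  have hs : ∑ i ∈ Finset.range 3, a^i / (Nat.factorial i) = 1 + a + a^2/2 := by
    norm_num [Finset.sum_range_succ, Nat.factorial]
  rw [hs, abs_of_nonneg h0] at e
  have e' := (abs_le.1 e).2
  norm_num [Nat.factorial] at e'
  nlinarith [e', pow_nonneg h0 3, sq_nonneg a]

lemma my_Ppsi (x : ℝ) (h0 : 0 ≤ x) (h1 : x ≤ 1.2528) :
    1.3456 - x ≤ 1.5707 * (1 - 0.56*x + (0.56*x)^2/2 - (0.56*x)^3/6 - (0.56*x)^4*(5/96))^2 := by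
  have hv : 0 ≤ 1.2528 - x := by linarith
  nlinarith [mul_nonneg h0 hv, mul_nonneg (mul_nonneg h0 h0) hv,
    mul_nonneg (mul_nonneg (mul_nonneg h0 h0) h0) hv,
    mul_nonneg (mul_nonneg (mul_nonneg (mul_nonneg h0 h0) h0) h0) hv,
    mul_nonneg (mul_nonneg (mul_nonneg (mul_nonneg (mul_nonneg h0 h0) h0) h0) h0) hv,
    mul_nonneg (mul_nonneg (mul_nonneg (mul_nonneg (mul_nonneg (mul_nonneg h0 h0) h0) h0) h0) h0) hv,
    mul_nonneg (mul_nonneg (mul_nonneg (mul_nonneg (mul_nonneg (mul_nonneg (mul_nonneg h0 h0) h0) h0) h0) h0) h0) hv,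
    sq_nonneg (x - 0.5), sq_nonneg (x-1), mul_nonneg h0 h0]

lemma my_Bpos (x : ℝ) (h0 : 0 ≤ x) (h1 : x ≤ 1.2528) :
    (0:ℝ) ≤ 1 - 0.56*x + (0.56*x)^2/2 - (0.56*x)^3/6 - (0.56*x)^4*(5/96) := by
  nlinarith [sq_nonneg (x-1), sq_nonneg x, mul_nonneg h0 h0,
    mul_nonneg (mul_nonneg h0 h0) h0, mul_nonneg (mul_nonneg (mul_nonneg h0 h0) h0) h0]

set_option maxHeartbeats 800000 in
lemma my_psi {x : ℝ} (h0 : 0 ≤ x) (h1 : x ≤ 1.2528) :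
    1.3456 - x ≤ 1.5707 * exp (-(1.12*x)) := by
  have hz : |(-(0.56*x))| ≤ 1 := by
    rw [abs_neg, abs_of_nonneg (by linarith : (0:ℝ) ≤ 0.56*x)]
    linarith
  have e := Real.exp_bound hz (n := 4) (by norm_num)
  have hs : ∑ i ∈ Finset.range 4, (-(0.56*x))^i / (Nat.factorial i)
      = 1 - 0.56*x + (0.56*x)^2/2 - (0.56*x)^3/6 := by
    norm_num [Finset.sum_range_succ, Nat.factorial]
    ring
  rw [hs, abs_neg, abs_of_nonneg (by linarith : (0:ℝ) ≤ 0.56*x)] at e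
  have e' := (abs_le.1 e).1
  norm_num [Nat.factorial] at e'
  have hB : 1 - 0.56*x + (0.56*x)^2/2 - (0.56*x)^3/6 - (0.56*x)^4*(5/96) ≤ exp (-(0.56*x)) := by
    nlinarith [e']
  have hB0 := my_Bpos x h0 h1
  have hsq : exp (-(1.12*x)) = exp (-(0.56*x)) * exp (-(0.56*x)) := by
    rw [← exp_add]; congr 1; ring
  have hBB : (1 - 0.56*x + (0.56*x)^2/2 - (0.56*x)^3/6 - (0.56*x)^4*(5/96))^2 ≤ exp (-(1.12*x)) := by
    rw [hsq, sq]
    exact mul_le_mul hB hB hB0 (exp_pos _).le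
  have hpoly := my_Ppsi x h0 h1
  nlinarith [hBB, hpoly]

set_option maxHeartbeats 1600000 in
lemma my_sec {p : ℝ} (hp : 9 ≤ p) :
    0 < cos (π/(2*p)) ∧ 0 ≤ -log (cos (π/(2*p))) ∧
      p * (p * (-log (cos (π/(2*p))))) ≤ 1.2528 ∧ 1.5707/p ≤ tan (π/(2*p)) := by
  have hp0 : (0:ℝ) < p := by linarith
  have hpi : (3.141592 : ℝ) < π := Real.pi_gt_d6
  have hpi2 : π < 3.141593 := Real.pi_lt_d6
  have hθpos : 0 < π/(2*p) := by positivity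
  have hθle : π/(2*p) ≤ π/18 := by
    apply div_le_div_of_nonneg_left Real.pi_pos.le (by norm_num) (by linarith)
  have hθub : π/(2*p) ≤ 0.1745330 := by
    calc π/(2*p) ≤ π/18 := hθle
      _ ≤ 3.141593/18 := by linarith
      _ ≤ 0.1745330 := by norm_num
  have hu : (π/(2*p))^2/2 ≤ 0.0152310 := by nlinarith [hθpos]
  have hc1 : 1 - (π/(2*p))^2/2 ≤ cos (π/(2*p)) := Real.one_sub_sq_div_two_le_cos
  have hcpos : 0 < cos (π/(2*p)) := by nlinarith [hc1, hu]
  have hcle1 : cos (π/(2*p)) ≤ 1 := Real.cos_le_one _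
  have hlogc0 : 0 ≤ -log (cos (π/(2*p))) := by
    have := Real.log_nonpos hcpos.le hcle1
    linarith
  refine ⟨hcpos, hlogc0, ?_, ?_⟩
  · -- main bound
    set u := (π/(2*p))^2/2 with hu_def
    have hupos : 0 < u := by positivity
    have h1u : (0:ℝ) < 1 - u := by linarith [hu]
    have hlog1 : log (1 - u) ≤ log (cos (π/(2*p))) :=
      Real.log_le_log h1u (by linarith [hc1])
    have hlog2 : 1 - (1-u)⁻¹ ≤ log (1-u) := Real.one_sub_inv_le_log_of_pos h1u
    have hX : -log (cos (π/(2*p))) ≤ (1-u)⁻¹ - 1 := by linarith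
    have hXu : ((1-u)⁻¹ - 1) * (1-u) = u := by field_simp; ring
    -- p^2 u = π^2/8
    have hp2u : p^2 * u = π^2/8 := by
      rw [hu_def]; field_simp; ring
    have hkey : p * (p * (-log (cos (π/(2*p))))) * (1-u) ≤ π^2/8 := by
      have h5 : p * (p * (-log (cos (π/(2*p))))) ≤ p^2 * ((1-u)⁻¹ - 1) := by
        have := mul_le_mul_of_nonneg_left hX (by positivity : (0:ℝ) ≤ p^2)
        nlinarith [this]
      have h6 : p^2 * ((1-u)⁻¹ - 1) * (1-u) = p^2 * u := by
        rw [mul_assoc, hXu]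
      nlinarith [mul_le_mul_of_nonneg_right h5 h1u.le, hp2u]
    have hpi8 : π^2/8 ≤ 1.2337010 := by nlinarith [hpi2, Real.pi_pos]
    have hX0 : 0 ≤ p * (p * (-log (cos (π/(2*p))))) := by positivity
    nlinarith [hkey, hu, mul_le_mul_of_nonneg_left hu hX0]
  · -- tan bound
    have htan : π/(2*p) < tan (π/(2*p)) := by
      apply Real.lt_tan hθpos
      calc π/(2*p) ≤ 0.1745330 := hθub
        _ < π/2 := by nlinarith [hpi]
    calc 1.5707/p ≤ π/(2*p) := by
          rw [div_le_div_iff₀ hp0 (by positivity)]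
          nlinarith [hpi]
      _ ≤ tan (π/(2*p)) := htan.le

set_option maxHeartbeats 1600000 in
theorem key_t_zero_large_p (p : ℝ) (hp : 9 ≤ p)
    (r : ℝ) (hr : r ∈ Set.Icc (0 : ℝ) 1) :
    (1 + r) ^ p / ((2 : ℝ) ^ p * Real.cos (π / (2 * p)) ^ p)
      - ((1 + r ^ (p / (p - 1))) / 2) ^ (p - 1)
      - r ^ (p / 2) * Real.tan (π / (2 * p)) ≤ 0 := by
  obtain ⟨hr0, hr1⟩ := hr
  have hp0 : (0:ℝ) < p := by linarith
  have hq0 : (0:ℝ) < p - 1 := by linarith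
  obtain ⟨hcpos, hA0', hpA, htan⟩ := my_sec hp
  have htan0 : 0 < tan (π/(2*p)) := lt_of_lt_of_le (by positivity) htan
  -- notation
  set c := cos (π/(2*p)) with hc
  set A := p * (-log c) with hA
  have hA0 : 0 ≤ A := by
    rw [hA]; exact mul_nonneg hp0.le hA0'
  have hAle : A ≤ 1.2528 / p := by
    rw [le_div_iff₀ hp0]
    calc A * p = p * (p * (-log c)) := by rw [hA]; ring
      _ ≤ 1.2528 := hpA
  have hA1392 : A ≤ 0.1392 := by
    refine le_trans hAle (le_trans (div_le_div_of_nonneg_left (by norm_num) (by norm_num) hp) ?_)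
    norm_num
  clear_value c A
  rcases eq_or_lt_of_le hr0 with hr0' | hr0'
  · -- r = 0 case
    rw [← hr0']
    have hne1 : p/(p-1) ≠ 0 := by positivity
    have hne2 : p/2 ≠ 0 := by positivity
    rw [Real.zero_rpow hne1, Real.zero_rpow hne2]
    rw [show ((1:ℝ)+0) = 1 by norm_num, Real.one_rpow]
    norm_num only
    have hA2 : A ≤ log 2 := by
      have := Real.log_two_gt_d9
      linarith
    have hlhs : (1:ℝ) / ((2:ℝ)^p * c^p) = exp (-(log 2 * p) - log c * p) := by
      rw [Real.rpow_def_of_pos (by norm_num : (0:ℝ) < 2), Real.rpow_def_of_pos hcpos,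
        ← Real.exp_add, one_div, ← Real.exp_neg]
      congr 1
      ring
    have hrhs : ((1:ℝ)/2) ^ (p-1) = exp (-(log 2) * (p-1)) := by
      rw [show ((1:ℝ)/2) = 2⁻¹ by norm_num, Real.rpow_def_of_pos (by norm_num : (0:ℝ) < 2⁻¹),
        Real.log_inv]
    rw [hlhs, hrhs]
    have hexp : exp (-(log 2 * p) - log c * p) ≤ exp (-(log 2) * (p-1)) := by
      apply exp_le_exp.2
      have : A = p * (-log c) := hA
      nlinarith [hA2, hA]
    linarith [hexp]
  · -- main case : 0 < r
    set x := Real.sqrt r with hxdef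
    have hx0 : 0 < x := Real.sqrt_pos.2 hr0'
    have hx1 : x ≤ 1 := Real.sqrt_le_one.mpr hr1
    have hr_x : x^2 = r := Real.sq_sqrt hr0'.le
    set t := -log x with htdef
    have ht0 : 0 ≤ t := by
      rw [htdef]; simp only [neg_nonneg]; exact Real.log_nonpos hx0.le hx1
    have hext : exp (-t) = x := by rw [htdef, neg_neg, Real.exp_log hx0]
    have hexpt : exp t = 1/x := by
      rw [show t = -(-t) by ring, Real.exp_neg, hext]; rw [one_div]
    have hlogr : log r = -(2*t) := by
      rw [← hr_x, show x^2 = x*x by ring, Real.log_mul (ne_of_gt hx0) (ne_of_gt hx0), htdef]; ring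
    have h1r : (0:ℝ) < 1 + r := by linarith
    -- cosh, tanh conversions
    have hchd : exp t + exp (-t) = (1+r)/x := by
      rw [hexpt, hext, ← hr_x]; field_simp
    have hshd : exp t - exp (-t) = (1-r)/x := by
      rw [hexpt, hext, ← hr_x]; field_simp
    have hch : (exp t + exp (-t))/2 = (1+r)/(2*x) := by
      rw [hchd, div_div, mul_comm x 2]
    have htanh : (exp t - exp (-t))/(exp t + exp (-t)) = (1-r)/(1+r) := by
      rw [hchd, hshd, div_div_div_cancel_right₀]
      exact ne_of_gt hx0
    -- beta and g
    set β := log ((1+r)/(2*x)) with hβdef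
    set g := log 2 - log (1+r) + r * log r/(1+r) with hgdef
    have hβexp : β = log (1+r) - log 2 + t := by
      rw [hβdef, Real.log_div (ne_of_gt h1r) (by positivity), Real.log_mul (by norm_num) (ne_of_gt hx0), htdef]
      ring
    have hβ0 : 0 ≤ β := by
      rw [hβdef]
      apply Real.log_nonneg
      rw [le_div_iff₀ (by positivity)]
      nlinarith [sq_nonneg (1-x)]
    have hgid : t * ((1-r)/(1+r)) - β = g := by
      rw [hgdef, hβexp, hlogr]
      field_simp
      ring
    clear_value x t β g
    -- rpow conversions
    have hgoalA : (1 + r) ^ p / ((2:ℝ) ^ p * c ^ p) = exp (p * log ((1+r)/2) + A) := by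
      rw [Real.rpow_def_of_pos h1r, Real.rpow_def_of_pos (by norm_num : (0:ℝ) < 2),
        Real.rpow_def_of_pos hcpos, ← Real.exp_add, div_eq_mul_inv, ← Real.exp_neg, ← Real.exp_add,
        Real.log_div (ne_of_gt h1r) (by norm_num), hA]
      congr 1
      ring
    have hs0 : (0:ℝ) < r ^ (p/(p-1)) := Real.rpow_pos_of_pos hr0' _
    have hgoalB : ((1 + r ^ (p/(p-1)))/2) ^ (p-1) = exp (log ((1 + r ^ (p/(p-1)))/2) * (p-1)) :=
      Real.rpow_def_of_pos (by positivity) _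
    have hgoalC : r ^ (p/2) = exp (p * log ((1+r)/2) - p * β) := by
      rw [Real.rpow_def_of_pos hr0', hβexp, hlogr,
        Real.log_div (ne_of_gt h1r) (by norm_num : (2:ℝ) ≠ 0)]
      congr 1
      ring
    -- Key 1: Hölder/convexity bound
    have key1 : p * log ((1+r)/2) + g ≤ log ((1 + r ^ (p/(p-1)))/2) * (p-1) := by
      set d := (2*t)/(p-1) with hddef
      have hd0 : 0 ≤ d := by positivity
      clear_value d
      have hrs : r ^ (p/(p-1)) = r * exp (-d) := by
        rw [Real.rpow_def_of_pos hr0']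
        have harg : log r * (p/(p-1)) = log r + (-d) := by
          rw [hlogr, hddef]; field_simp; ring
        rw [harg, Real.exp_add, Real.exp_log hr0']
      have hstep := my_holder hr0' hd0
      have hlogstep : log (1+r) ≤ log (1 + r * exp (-d)) + d * r/(1+r) := by
        have hpos2 : (0:ℝ) < 1 + r * exp (-d) := by positivity
        calc log (1+r) ≤ log ((1 + r * exp (-d)) * exp (d * r/(1+r))) :=
              Real.log_le_log h1r hstep
          _ = log (1 + r * exp (-d)) + d * r/(1+r) := by
              rw [Real.log_mul (ne_of_gt hpos2) (ne_of_gt (exp_pos _)), Real.log_exp]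
      have hmul := mul_le_mul_of_nonneg_left hlogstep hq0.le
      have hlogB2 : log ((1 + r ^ (p/(p-1)))/2) = log (1 + r * exp (-d)) - log 2 := by
        rw [Real.log_div (by positivity) (by norm_num : (2:ℝ) ≠ 0), hrs]
      have hdq : (p-1) * (d * r /(1+r)) = -(r * log r /(1+r)) := by
        rw [hddef, hlogr]
        field_simp
      have hL1 : log ((1+r)/2) = log (1+r) - log 2 :=
        Real.log_div (ne_of_gt h1r) (by norm_num)
      rw [hlogB2, hgdef, hL1]
      linarith [hmul, hdq]
    -- core inequality
    have core : exp A ≤ exp g + tan (π/(2*p)) * exp (-(p*β)) := by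
      rcases le_or_gt A g with hcase | hcase
      · have h1 : exp A ≤ exp g := exp_le_exp.2 hcase
        have h2 : 0 < tan (π/(2*p)) * exp (-(p*β)) := by positivity
        linarith
      · -- Case II
        have hgA : g < 0.1392 := lt_of_lt_of_le hcase hA1392
        have ht58 : t ≤ 0.58 := by
          by_contra hcon
          push_neg at hcon
          have := my_g_big t hcon.le
          rw [htanh, hch] at this
          rw [← hβdef] at this
          rw [hgid] at this
          linarith
        have hβg := my_beta_le t ht0 ht58
        rw [htanh, hch, ← hβdef, hgid] at hβg
        have hg0 : 0 ≤ g := by linarith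
        have hx2528 : p * g ≤ 1.2528 := by
          calc p * g ≤ p * A := mul_le_mul_of_nonneg_left hcase.le hp0.le
            _ = A * p := by ring
            _ ≤ 1.2528 := by rw [← le_div_iff₀ hp0]; exact hAle
        have hpsi := my_psi (mul_nonneg hp0.le hg0) hx2528
        have hβ112 : p * β ≤ 1.12 * (p * g) := by
          calc p * β ≤ p * (1.12 * g) := mul_le_mul_of_nonneg_left (by linarith) hp0.le
            _ = 1.12 * (p * g) := by ring
        have hexpβ : exp (-(1.12 * (p*g))) ≤ exp (-(p*β)) := exp_le_exp.2 (by linarith)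
        have htA : tan (π/(2*p)) * exp (-(p*β)) ≥ (1.5707/p) * exp (-(1.12*(p*g))) := by
          apply mul_le_mul htan hexpβ (exp_pos _).le htan0.le
        have hcub : exp A ≤ 1 + 1.074 * A := my_exp_cubic hA0 hA1392
        have hgexp : 1 + g ≤ exp g := by linarith [Real.add_one_le_exp g]
        have hfin : (1.3456 - p*g)/p ≤ (1.5707/p) * exp (-(1.12*(p*g))) := by
          rw [div_le_iff₀ hp0]
          calc 1.3456 - p*g ≤ 1.5707 * exp (-(1.12*(p*g))) := hpsi
            _ = 1.5707/p * exp (-(1.12*(p*g))) * p := by field_simp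
        have hAfin : 1.074 * A ≤ 1.3456/p := by
          rw [le_div_iff₀ hp0]
          have : A * p = p * A := by ring
          linarith [hpA]
        have : (1.3456 - p*g)/p = 1.3456/p - g := by field_simp
        linarith [htA, hcub, hgexp, hfin, hAfin]
    -- assemble
    have hBge : exp (p * log ((1+r)/2)) * exp g ≤ ((1 + r ^ (p/(p-1)))/2) ^ (p-1) := by
      rw [hgoalB, ← Real.exp_add]
      exact exp_le_exp.2 key1
    have hCeq : r ^ (p/2) * tan (π/(2*p)) = exp (p * log ((1+r)/2)) * (tan (π/(2*p)) * exp (-(p*β))) := by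
      rw [hgoalC, show p * log ((1+r)/2) - p * β = p * log ((1+r)/2) + (-(p*β)) by ring, Real.exp_add]
      ring
    have hAeq : (1 + r) ^ p / ((2:ℝ) ^ p * c ^ p) = exp (p * log ((1+r)/2)) * exp A := by
      rw [hgoalA, Real.exp_add]
    have hmul := mul_le_mul_of_nonneg_left core (exp_pos (p * log ((1+r)/2))).le
    rw [mul_add] at hmul
    rw [hAeq, hCeq]
    linarith [hBge, hmul]
end

section
/- For p ≥ 9 and all r with 0 ≤ r ≤ 2^(1/p)·cos(π/(2p)) − 1, one has ((1 + r^(p/(p−1)))/2)^(p−1) + r^(p/2)·tan(π/(2p)) ≥ (1+r)^p / (2^p · cos^p(π/(2p))). -/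
open Real

theorem first_step_large_p (p : ℝ) (hp : 9 ≤ p)
    (r : ℝ) (hr0 : 0 ≤ r) (hr1 : r ≤ (2 : ℝ) ^ (1 / p) * Real.cos (π / (2 * p)) - 1) :
    ((1 + r ^ (p / (p - 1))) / 2) ^ (p - 1) + r ^ (p / 2) * Real.tan (π / (2 * p)) ≥
      (1 + r) ^ p / ((2 : ℝ) ^ p * Real.cos (π / (2 * p)) ^ p) := by
  have hp0 : (0:ℝ) < p := by linarith
  have hπ : (0:ℝ) < π := Real.pi_pos
  have hang0 : 0 < π / (2 * p) := by positivity
  have hang1 : π / (2 * p) < π / 2 :=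
    div_lt_div_of_pos_left hπ (by norm_num) (by linarith)
  have hc : 0 < Real.cos (π / (2 * p)) :=
    Real.cos_pos_of_mem_Ioo ⟨by linarith, hang1⟩
  set c := Real.cos (π / (2 * p)) with hcdef
  -- second term nonneg
  have htan : 0 ≤ Real.tan (π / (2 * p)) := by
    rw [Real.tan_eq_sin_div_cos]
    exact div_nonneg (Real.sin_nonneg_of_nonneg_of_le_pi hang0.le (by linarith)) hc.le
  have hterm2 : 0 ≤ r ^ (p / 2) * Real.tan (π / (2 * p)) :=
    mul_nonneg (Real.rpow_nonneg hr0 _) htan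
  -- (1+r)^p ≤ 2 * c^p
  have h1r : (0:ℝ) ≤ 1 + r := by linarith
  have hle : 1 + r ≤ (2:ℝ) ^ (1 / p) * c := by linarith
  have key1 : (1 + r) ^ p ≤ 2 * c ^ p := by
    have h := Real.rpow_le_rpow h1r hle hp0.le
    have e : ((2:ℝ) ^ (1 / p) * c) ^ p = 2 * c ^ p := by
      rw [Real.mul_rpow (by positivity) hc.le]
      rw [← Real.rpow_mul (by norm_num : (0:ℝ) ≤ 2)]
      rw [one_div, inv_mul_cancel₀ hp0.ne', Real.rpow_one]
    calc (1 + r) ^ p ≤ ((2:ℝ) ^ (1 / p) * c) ^ p := h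
      _ = 2 * c ^ p := e
  -- RHS ≤ (1/2)^(p-1)
  have hcp : (0:ℝ) < c ^ p := Real.rpow_pos_of_pos hc p
  have h2p1 : (0:ℝ) < (2:ℝ) ^ (p - 1) := Real.rpow_pos_of_pos (by norm_num) _
  have e2 : (2:ℝ) ^ p = 2 ^ (p - 1) * 2 := by
    rw [← Real.rpow_add_one (by norm_num : (2:ℝ) ≠ 0) (p - 1)]
    ring_nf
  have ehalf : ((1:ℝ) / 2) ^ (p - 1) = ((2:ℝ) ^ (p - 1))⁻¹ := by
    rw [one_div, ← Real.inv_rpow (by norm_num : (0:ℝ) ≤ 2)]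
  have key2 : (1 + r) ^ p / ((2:ℝ) ^ p * c ^ p) ≤ ((1:ℝ) / 2) ^ (p - 1) := by
    rw [div_le_iff₀ (by positivity), ehalf, e2]
    calc (1 + r) ^ p ≤ 2 * c ^ p := key1
      _ = ((2:ℝ) ^ (p - 1))⁻¹ * (2 ^ (p - 1) * 2 * c ^ p) := by
          field_simp
  -- first term ≥ (1/2)^(p-1)
  have key3 : ((1:ℝ) / 2) ^ (p - 1) ≤ ((1 + r ^ (p / (p - 1))) / 2) ^ (p - 1) := by
    apply Real.rpow_le_rpow (by norm_num)
    · have := Real.rpow_nonneg hr0 (p / (p - 1))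
      linarith
    · linarith
  linarith
end

section
/- For all real p > 3, (p−1)·log(1 − 2/((p−1)(p−2))) − log(1 − 2/p) < 0. -/
theorem G_neg (p : ℝ) (hp : 3 < p) :
    (p - 1) * Real.log (1 - 2 / ((p - 1) * (p - 2))) - Real.log (1 - 2 / p) < 0 := by
  have hp1 : (0:ℝ) < p - 1 := by linarith
  have hp2 : (0:ℝ) < p - 2 := by linarith
  have hp3 : (0:ℝ) < p - 3 := by linarith
  have hp0 : (0:ℝ) < p := by linarith
  -- first term
  have hA : 1 - 2 / ((p - 1) * (p - 2)) = p * (p - 3) / ((p - 1) * (p - 2)) := by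
    field_simp; ring
  have hApos : 0 < 1 - 2 / ((p - 1) * (p - 2)) := by rw [hA]; positivity
  have hAne : 1 - 2 / ((p - 1) * (p - 2)) ≠ 1 := by
    have h : 0 < 2 / ((p - 1) * (p - 2)) := by positivity
    intro hc; nlinarith
  have h1 : Real.log (1 - 2 / ((p - 1) * (p - 2))) < -(2 / ((p - 1) * (p - 2))) := by
    have := Real.log_lt_sub_one_of_pos hApos hAne
    linarith
  have h1' : (p - 1) * Real.log (1 - 2 / ((p - 1) * (p - 2))) < -(2 / (p - 2)) := by
    have := mul_lt_mul_of_pos_left h1 hp1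
    have heq : (p - 1) * -(2 / ((p - 1) * (p - 2))) = -(2 / (p - 2)) := by
      field_simp
    linarith
  -- second term
  have hB : 1 - 2 / p = (p - 2) / p := by field_simp
  have hCpos : 0 < p / (p - 2) := by positivity
  have hCne : p / (p - 2) ≠ 1 := by
    intro hc
    have : p = p - 2 := by
      field_simp at hc; linarith
    linarith
  have h2 : Real.log (p / (p - 2)) < p / (p - 2) - 1 :=
    Real.log_lt_sub_one_of_pos hCpos hCne
  have hlog : Real.log (1 - 2 / p) = -Real.log (p / (p - 2)) := by
    rw [hB, ← Real.log_inv]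
    congr 1
    field_simp
  have heq2 : p / (p - 2) - 1 = 2 / (p - 2) := by field_simp; ring
  rw [hlog]
  linarith
end
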